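/- arXiv:0902.1218 — 5 statements merged into one kernel-verified Lean document; each statement's English description precedes it below -/
import Mathlib

section
/- Let p be a prime, n ≥ 3, and 1 ≤ k, l ≤ n−1. Let V be a k-dimensional ℚ_p-subspace of ℚ_p^n, let W be an l-dimensional ℚ_p-subspace of ℚ_p^n, and let K ≤ SL_n(ℤ_p) be a subgroup of finite index. If every g ∈ K with gV = V also satisfies gW = W, then l = k and W = V. -/
open scoped MatrixGroups
open Matrix

/-- The image of a `ℚ_p`-subspace of `ℚ_p^n` under the matrix `g`. -/
noncomputable def matActP {p : ℕ} [Fact p.Prime] {n : ℕ} (g : Matrix (Fin n) (Fin n) ℚ_[p])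
    (V : Submodule ℚ_[p] (Fin n → ℚ_[p])) : Submodule ℚ_[p] (Fin n → ℚ_[p]) :=
  V.map g.mulVecLin

/-- A matrix in `SL_n(ℤ_p)`, viewed as a `p`-adic matrix. -/
noncomputable def pMat {p : ℕ} [Fact p.Prime] {n : ℕ}
    (g : Matrix.SpecialLinearGroup (Fin n) ℤ_[p]) : Matrix (Fin n) (Fin n) ℚ_[p] :=
  (g : Matrix (Fin n) (Fin n) ℤ_[p]).map ((↑) : ℤ_[p] → ℚ_[p])


variable {p : ℕ} [Fact p.Prime] {n : ℕ}


/-- scale a vector into ℤ_p by a power of p -/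
lemma exists_scale (u : Fin n → ℚ_[p]) : ∃ a : ℕ, ∀ i, ‖(p : ℚ_[p]) ^ a * u i‖ ≤ 1 := by
  have hp1 : (1 : ℝ) < p := by exact_mod_cast (Fact.out : p.Prime).one_lt
  have key : ∀ x : ℚ_[p], ∃ a : ℕ, ∀ b : ℕ, a ≤ b → ‖(p : ℚ_[p]) ^ b * x‖ ≤ 1 := by
    intro x
    obtain ⟨a, ha⟩ := pow_unbounded_of_one_lt ‖x‖ hp1
    refine ⟨a, fun b hb => ?_⟩
    rw [norm_mul, norm_pow, Padic.norm_p]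
    calc ((p:ℝ)⁻¹) ^ b * ‖x‖ ≤ ((p:ℝ)⁻¹) ^ a * (p:ℝ)^a := by
          apply mul_le_mul ?_ ha.le (norm_nonneg x) (by positivity)
          exact pow_le_pow_of_le_one (by positivity) (inv_le_one_of_one_le₀ hp1.le) hb
      _ = 1 := by
          rw [← mul_pow, inv_mul_cancel₀ (by positivity), one_pow]
  choose A hA using key
  classical
  refine ⟨Finset.univ.sup (fun i => A (u i)), fun i => ?_⟩
  exact hA (u i) _ (Finset.le_sup (f := fun i => A (u i)) (Finset.mem_univ i))

lemma exists_dual (U : Submodule ℚ_[p] (Fin n → ℚ_[p])) (x : Fin n → ℚ_[p]) (hx : x ∉ U) :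
    ∃ f : (Fin n → ℚ_[p]) →ₗ[ℚ_[p]] ℚ_[p], (∀ y ∈ U, f y = 0) ∧ f x ≠ 0 := by
  have h1 : U.mkQ x ≠ 0 := by
    simpa [Submodule.Quotient.mk_eq_zero] using hx
  obtain ⟨g, hg⟩ : ∃ g : Module.Dual ℚ_[p] ((Fin n → ℚ_[p]) ⧸ U), g (U.mkQ x) ≠ 0 := by
    by_contra h
    push_neg at h
    exact h1 ((Module.forall_dual_apply_eq_zero_iff ℚ_[p] _).mp h)
  refine ⟨g ∘ₗ U.mkQ, fun y hy => ?_, hg⟩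
  simp [Submodule.mkQ_apply, (Submodule.Quotient.mk_eq_zero U).mpr hy]

lemma exists_vec (f : (Fin n → ℚ_[p]) →ₗ[ℚ_[p]] ℚ_[p]) :
    ∃ v : Fin n → ℚ_[p], ∀ x, v ⬝ᵥ x = f x := by
  refine ⟨fun i => f (Pi.single i 1), fun x => ?_⟩
  conv_rhs => rw [← Finset.univ_sum_single x]
  rw [map_sum, dotProduct]
  refine Finset.sum_congr rfl fun i _ => ?_
  have : Pi.single i (x i) = x i • (Pi.single i (1 : ℚ_[p]) : Fin n → ℚ_[p]) := by
    ext j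
    simp [Pi.single_apply, mul_ite]
  rw [this, _root_.map_smul, smul_eq_mul, mul_comm]


lemma pMat_eq_mapMatrix (g : Matrix.SpecialLinearGroup (Fin n) ℤ_[p]) :
    pMat g = (PadicInt.Coe.ringHom (p := p)).mapMatrix (g : Matrix (Fin n) (Fin n) ℤ_[p]) := rfl

lemma pMat_pow (g : Matrix.SpecialLinearGroup (Fin n) ℤ_[p]) (m : ℕ) :
    pMat (g ^ m) = (pMat g) ^ m := by
  rw [pMat_eq_mapMatrix, pMat_eq_mapMatrix, Matrix.SpecialLinearGroup.coe_pow, map_pow]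

lemma matActP_mul (A B : Matrix (Fin n) (Fin n) ℚ_[p]) (V : Submodule ℚ_[p] (Fin n → ℚ_[p])) :
    matActP (A * B) V = matActP A (matActP B V) := by
  rw [matActP, matActP, matActP, Matrix.mulVecLin_mul, Submodule.map_comp]

lemma matActP_pow (A : Matrix (Fin n) (Fin n) ℚ_[p]) (V : Submodule ℚ_[p] (Fin n → ℚ_[p]))
    (h : matActP A V = V) (m : ℕ) : matActP (A ^ m) V = V := by
  induction m with
  | zero => simp [matActP]
  | succ m ih => rw [pow_succ, matActP_mul, h, ih]

lemma mulVecLin_one_add_vecMulVec (u v x : Fin n → ℚ_[p]) :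
    (1 + vecMulVec u v).mulVecLin x = x + (v ⬝ᵥ x) • u := by
  rw [Matrix.mulVecLin_apply, Matrix.add_mulVec, Matrix.one_mulVec]
  congr 1
  funext i
  simp only [Matrix.mulVec, dotProduct, vecMulVec_apply, Pi.smul_apply, smul_eq_mul]
  rw [Finset.sum_mul]
  exact Finset.sum_congr rfl fun j _ => by ring

lemma vecMulVec_mul_vecMulVec (u v u' v' : Fin n → ℚ_[p]) :
    vecMulVec u v * vecMulVec u' v' = (v ⬝ᵥ u') • vecMulVec u v' := by
  ext i j
  simp only [Matrix.mul_apply, vecMulVec_apply, Matrix.smul_apply, smul_eq_mul, dotProduct]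
  rw [Finset.sum_mul]
  exact Finset.sum_congr rfl fun k _ => by ring

lemma one_add_pow_sq_zero (N : Matrix (Fin n) (Fin n) ℚ_[p]) (hN : N * N = 0) (m : ℕ) :
    (1 + N) ^ m = 1 + (m : ℚ_[p]) • N := by
  induction m with
  | zero => simp
  | succ m ih =>
    rw [pow_succ, ih, add_mul, one_mul, mul_add, mul_one, smul_mul_assoc, hN, smul_zero,
      add_zero]
    push_cast
    module

lemma stab_one_add (u v : Fin n → ℚ_[p]) (huv : v ⬝ᵥ u = 0)
    (V : Submodule ℚ_[p] (Fin n → ℚ_[p])) (huV : ∀ x ∈ V, (v ⬝ᵥ x) • u ∈ V) :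
    matActP (1 + vecMulVec u v) V = V := by
  apply le_antisymm
  · rintro _ ⟨x, hx, rfl⟩
    rw [mulVecLin_one_add_vecMulVec]
    exact V.add_mem hx (huV x hx)
  · intro x hx
    refine ⟨x - (v ⬝ᵥ x) • u, V.sub_mem hx (huV x hx), ?_⟩
    rw [mulVecLin_one_add_vecMulVec, dotProduct_sub, dotProduct_smul, huv, smul_eq_mul,
      mul_zero, sub_zero, sub_add_cancel]

/-- The main engine: under the stabilizer hypothesis, `W` is invariant under every
rank-one square-zero transformation preserving `V`. -/
lemma engine (V W : Submodule ℚ_[p] (Fin n → ℚ_[p]))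
    (K : Subgroup (Matrix.SpecialLinearGroup (Fin n) ℤ_[p])) (hK : K.FiniteIndex)
    (hstab : ∀ g ∈ K, matActP (pMat g) V = V → matActP (pMat g) W = W)
    (u v : Fin n → ℚ_[p]) (huv : v ⬝ᵥ u = 0)
    (huV : ∀ x ∈ V, (v ⬝ᵥ x) • u ∈ V) :
    ∀ w ∈ W, (v ⬝ᵥ w) • u ∈ W := by
  classical
  obtain ⟨a, ha⟩ := exists_scale u
  obtain ⟨b, hb⟩ := exists_scale v
  set c : ℚ_[p] := (p : ℚ_[p]) ^ a with hc
  set d : ℚ_[p] := (p : ℚ_[p]) ^ b with hd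
  have hp0 : (p : ℚ_[p]) ≠ 0 := by
    exact_mod_cast (Fact.out : p.Prime).ne_zero
  have hc0 : c ≠ 0 := pow_ne_zero _ hp0
  have hd0 : d ≠ 0 := pow_ne_zero _ hp0
  set u' : Fin n → ℚ_[p] := c • u with hu'
  set v' : Fin n → ℚ_[p] := d • v with hv'
  have huv' : v' ⬝ᵥ u' = 0 := by
    rw [hu', hv', smul_dotProduct, dotProduct_smul, huv]; simp
  -- integral versions
  set u₀ : Fin n → ℤ_[p] := fun i => ⟨c * u i, ha i⟩ with hu₀
  set v₀ : Fin n → ℤ_[p] := fun i => ⟨d * v i, hb i⟩ with hv₀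
  set A : Matrix (Fin n) (Fin n) ℤ_[p] := 1 + vecMulVec u₀ v₀ with hA
  have hmap : A.map ((↑) : ℤ_[p] → ℚ_[p]) = 1 + vecMulVec u' v' := by
    ext i j
    simp only [hA, Matrix.map_apply, Matrix.add_apply, vecMulVec_apply, Matrix.one_apply]
    change ((((1 + vecMulVec u₀ v₀ : Matrix (Fin n) (Fin n) ℤ_[p]) i j) : ℤ_[p]) : ℚ_[p]) = _
    simp only [Matrix.add_apply, vecMulVec_apply, Matrix.one_apply]
    push_cast
    simp only [hu', hv', Pi.smul_apply, smul_eq_mul]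
    split <;> simp [hu₀, hv₀] <;> ring
  have hdet : A.det = 1 := by
    have h : ((A.det : ℤ_[p]) : ℚ_[p]) = (A.map ((↑) : ℤ_[p] → ℚ_[p])).det :=
      RingHom.map_det (PadicInt.Coe.ringHom (p := p)) A
    have h2 : ((A.det : ℤ_[p]) : ℚ_[p]) = 1 := by
      rw [h, hmap, vecMulVec_eq (ι := Unit), det_one_add_replicateCol_mul_replicateRow, huv', add_zero]
    exact Subtype.ext (by simpa using h2)
  set g : Matrix.SpecialLinearGroup (Fin n) ℤ_[p] := ⟨A, hdet⟩ with hg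
  have hpg : pMat g = 1 + vecMulVec u' v' := hmap
  have huV' : ∀ x ∈ V, (v' ⬝ᵥ x) • u' ∈ V := by
    intro x hx
    have h := V.smul_mem (d * c) (huV x hx)
    rw [smul_smul] at h
    have e : (v' ⬝ᵥ x) • u' = (d * c * (v ⬝ᵥ x)) • u := by
      rw [hv', hu', smul_dotProduct, smul_eq_mul, smul_smul]
      congr 1
      ring
    rwa [e]
  have hgV : matActP (pMat g) V = V := by
    rw [hpg]; exact stab_one_add u' v' huv' V huV'
  obtain ⟨m, hm0, _, hmK⟩ := Subgroup.exists_pow_mem_of_index_ne_zero hK.index_ne_zero g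
  have hNN : vecMulVec u' v' * vecMulVec u' v' = 0 := by
    rw [_root_.vecMulVec_mul_vecMulVec, huv', zero_smul]
  have hgmW : matActP (pMat (g ^ m)) W = W := by
    apply hstab _ hmK
    rw [pMat_pow]
    exact matActP_pow _ _ hgV m
  rw [pMat_pow, hpg, one_add_pow_sq_zero _ hNN] at hgmW
  intro w hw
  have hmem : (1 + (m : ℚ_[p]) • vecMulVec u' v').mulVecLin w ∈ W := by
    rw [← hgmW]; exact ⟨w, hw, rfl⟩
  have hform : (1 + (m : ℚ_[p]) • vecMulVec u' v').mulVecLin w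
      = w + ((m : ℚ_[p]) * (v' ⬝ᵥ w)) • u' := by
    have := mulVecLin_one_add_vecMulVec ((m : ℚ_[p]) • u') v' w
    rw [show vecMulVec ((m : ℚ_[p]) • u') v' = (m : ℚ_[p]) • vecMulVec u' v' by
      ext i j; simp [vecMulVec_apply, mul_assoc]] at this
    rw [this, smul_smul, mul_comm]
  rw [hform] at hmem
  have h2 : ((m : ℚ_[p]) * (v' ⬝ᵥ w)) • u' ∈ W := by
    have := W.sub_mem hmem hw
    simpa using this
  have hm0' : (m : ℚ_[p]) ≠ 0 := Nat.cast_ne_zero.mpr hm0.ne'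
  have heq : ((m : ℚ_[p]) * (v' ⬝ᵥ w)) • u' = ((m : ℚ_[p]) * c * d) • ((v ⬝ᵥ w) • u) := by
    rw [hu', hv', smul_dotProduct, smul_eq_mul, smul_smul, smul_smul]
    congr 1
    ring
  rw [heq] at h2
  have : ((m : ℚ_[p]) * c * d)⁻¹ • (((m : ℚ_[p]) * c * d) • ((v ⬝ᵥ w) • u)) ∈ W :=
    W.smul_mem _ h2
  rwa [smul_smul, inv_mul_cancel₀ (by simp [hm0', hc0, hd0]), one_smul] at this

lemma ker_finrank_eq (f : (Fin n → ℚ_[p]) →ₗ[ℚ_[p]] ℚ_[p]) (x : Fin n → ℚ_[p]) (hx : f x ≠ 0) :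
    Module.finrank ℚ_[p] (LinearMap.ker f) = n - 1 := by
  have hrange : LinearMap.range f = ⊤ := by
    rw [LinearMap.range_eq_top]
    intro c
    exact ⟨(c / f x) • x, by rw [_root_.map_smul, smul_eq_mul, div_mul_cancel₀ _ hx]⟩
  have h := LinearMap.finrank_range_add_finrank_ker f
  rw [hrange, finrank_top, Module.finrank_fin_fun, Module.finrank_self] at h
  omega

/-- **Proposition 2.5.**  Let `n ≥ 3`, `V ∈ Gr_k(ℚ_p^n)`, `W ∈ Gr_l(ℚ_p^n)` and let
`K ≤ SL_n(ℤ_p)` be a finite-index subgroup.  If the stabilizer of `V` in `K` is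
contained in the stabilizer of `W`, then `l = k` and `W = V`. -/
theorem stabilizer_subset_eq (p n k l : ℕ) [Fact p.Prime] (hn : 3 ≤ n)
    (hk1 : 1 ≤ k) (hk2 : k ≤ n - 1) (hl1 : 1 ≤ l) (hl2 : l ≤ n - 1)
    (V W : Submodule ℚ_[p] (Fin n → ℚ_[p]))
    (hV : Module.finrank ℚ_[p] V = k) (hW : Module.finrank ℚ_[p] W = l)
    (K : Subgroup (Matrix.SpecialLinearGroup (Fin n) ℤ_[p])) (hK : K.FiniteIndex)
    (hstab : ∀ g ∈ K, matActP (pMat g) V = V → matActP (pMat g) W = W) :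
    l = k ∧ W = V := by
  classical
  have hfr : Module.finrank ℚ_[p] (Fin n → ℚ_[p]) = n := Module.finrank_fin_fun ℚ_[p]
  -- Step 1: W ≤ V
  have hWV : W ≤ V := by
    by_contra hWV
    obtain ⟨w₀, hw₀W, hw₀V⟩ := SetLike.not_le_iff_exists.mp hWV
    have key : ∀ f : (Fin n → ℚ_[p]) →ₗ[ℚ_[p]] ℚ_[p], (∀ y ∈ V, f y = 0) → f w₀ ≠ 0 →
        W = LinearMap.ker f := by
      intro f hfV hfw
      obtain ⟨v, hv⟩ := exists_vec f
      have hker : LinearMap.ker f ≤ W := by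
        intro x hxk
        have hx : f x = 0 := hxk
        have h1 := engine V W K hK hstab x v (by rw [hv, hx]) (fun y hy => by
          rw [hv, hfV y hy, zero_smul]; exact V.zero_mem) w₀ hw₀W
        rw [hv] at h1
        have h2 := W.smul_mem (f w₀)⁻¹ h1
        rwa [smul_smul, inv_mul_cancel₀ hfw, one_smul] at h2
      have hrk : Module.finrank ℚ_[p] (LinearMap.ker f) = n - 1 := ker_finrank_eq f w₀ hfw
      exact (Submodule.eq_of_le_of_finrank_le hker (by rw [hW, hrk]; exact hl2)).symm
    obtain ⟨f, hfV, hfw⟩ := exists_dual V w₀ hw₀V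
    have hWf := key f hfV hfw
    have hrk : Module.finrank ℚ_[p] (LinearMap.ker f) = n - 1 := ker_finrank_eq f w₀ hfw
    by_cases hcase : k = n - 1
    · have hVker : V ≤ LinearMap.ker f := fun y hy => hfV y hy
      have hVf : V = LinearMap.ker f :=
        Submodule.eq_of_le_of_finrank_le hVker (by rw [hV, hrk, hcase])
      exact hw₀V (hVf ▸ hWf ▸ hw₀W)
    · have hw₀0 : w₀ ≠ 0 := fun h => hw₀V (h ▸ V.zero_mem)
      have hUrk : Module.finrank ℚ_[p] ↥(V ⊔ Submodule.span ℚ_[p] {w₀}) < n := by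
        have h1 := Submodule.finrank_sup_add_finrank_inf_eq V (Submodule.span ℚ_[p] {w₀})
        have h2 : Module.finrank ℚ_[p] ↥(Submodule.span ℚ_[p] {w₀}) = 1 :=
          finrank_span_singleton hw₀0
        rw [hV, h2] at h1
        omega
      have hUne : V ⊔ Submodule.span ℚ_[p] {w₀} ≠ ⊤ := by
        intro h
        rw [h, finrank_top, hfr] at hUrk
        omega
      obtain ⟨z, -, hzU⟩ := SetLike.exists_of_lt
        (lt_of_le_of_ne (le_top : V ⊔ Submodule.span ℚ_[p] {w₀} ≤ ⊤) hUne)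
      obtain ⟨ψ, hψU, hψz⟩ := exists_dual (V ⊔ Submodule.span ℚ_[p] {w₀}) z hzU
      have hψV : ∀ y ∈ V, ψ y = 0 := fun y hy => hψU y (le_sup_left (a := V) hy)
      have hψw : ψ w₀ = 0 := hψU w₀
        ((le_sup_right (a := V)) (Submodule.mem_span_singleton_self w₀))
      have hWf₂ := key (f + ψ) (fun y hy => by
          simp [hfV y hy, hψV y hy]) (by simp [hψw, hfw])
      set y₀ : Fin n → ℚ_[p] := z - (f z / f w₀) • w₀ with hy₀
      have hfy₀ : f y₀ = 0 := by
        rw [hy₀, map_sub, _root_.map_smul, smul_eq_mul, div_mul_cancel₀ _ hfw, sub_self]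
      have hy₀W : y₀ ∈ W := by rw [hWf]; exact hfy₀
      have hf₂y₀ : (f + ψ) y₀ = 0 := by rw [← LinearMap.mem_ker, ← hWf₂]; exact hy₀W
      rw [LinearMap.add_apply, hfy₀, zero_add, hy₀, map_sub, _root_.map_smul, smul_eq_mul, hψw,
        mul_zero, sub_zero] at hf₂y₀
      exact hψz hf₂y₀
  -- Step 2: V ≤ W
  have hVW : V ≤ W := by
    have hW0 : W ≠ ⊥ := by
      intro h
      rw [h, finrank_bot] at hW
      omega
    obtain ⟨w₀, hw₀W, hw₀0⟩ := Submodule.exists_mem_ne_zero_of_ne_bot hW0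
    intro x hxV
    by_cases hsp : w₀ ∈ Submodule.span ℚ_[p] {x}
    · obtain ⟨c, hc⟩ := Submodule.mem_span_singleton.mp hsp
      have hc0 : c ≠ 0 := by
        rintro rfl
        exact hw₀0 (by rw [← hc, zero_smul])
      have hx : x = c⁻¹ • w₀ := by rw [← hc, smul_smul, inv_mul_cancel₀ hc0, one_smul]
      rw [hx]
      exact W.smul_mem _ hw₀W
    · obtain ⟨f, hfU, hfw⟩ := exists_dual (Submodule.span ℚ_[p] {x}) w₀ hsp
      obtain ⟨v, hv⟩ := exists_vec f
      have hfx : f x = 0 := hfU x (Submodule.mem_span_singleton_self x)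
      have h1 := engine V W K hK hstab x v (by rw [hv, hfx])
        (fun y hy => V.smul_mem _ hxV) w₀ hw₀W
      rw [hv] at h1
      have h2 := W.smul_mem (f w₀)⁻¹ h1
      rwa [smul_smul, inv_mul_cancel₀ hfw, one_smul] at h2
  have hEq : W = V := le_antisymm hWV hVW
  exact ⟨by rw [← hW, ← hV, hEq], hEq⟩
end

section
/- Let p be a prime, n ≥ 3, and let Γ ≤ SL_n(ℤ) be a subgroup of finite index. Then there exists t ≥ 1 such that the principal congruence subgroup K_{p^t} of SL_n(ℤ_p) is contained in the closure of Γ in SL_n(ℤ_p). Consequently, for every 0 ≤ k ≤ n and every V ∈ Gr_k(ℚ_p^n), the ergodic component cl(Γ)·V of V (the orbit of V under the closure of Γ) contains the principal congruence component K_{p^t}·V. -/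
set_option linter.unreachableTactic false
set_option linter.unusedTactic false
set_option linter.unnecessarySeqFocus false
set_option maxHeartbeats 1000000


open scoped MatrixGroups

/-- The topology on `SL_n(ℤ_p)` (as a closed subspace of the `p`-adic matrices). -/
noncomputable instance (p n : ℕ) [Fact p.Prime] :
    TopologicalSpace (Matrix.SpecialLinearGroup (Fin n) ℤ_[p]) :=
  (inferInstance : TopologicalSpace {A : Matrix (Fin n) (Fin n) ℤ_[p] // A.det = 1})

/-- The canonical embedding `SL_n(ℤ) → SL_n(ℤ_p)`. -/
noncomputable def iotaSL (p n : ℕ) [Fact p.Prime] :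
    Matrix.SpecialLinearGroup (Fin n) ℤ →* Matrix.SpecialLinearGroup (Fin n) ℤ_[p] :=
  Matrix.SpecialLinearGroup.map (Int.castRingHom ℤ_[p])

/-- The congruence subgroup `K_{p^t} ≤ SL_n(ℤ_p)`, as a set. -/
def congSetP (p n : ℕ) [Fact p.Prime] (t : ℕ) :
    Set (Matrix.SpecialLinearGroup (Fin n) ℤ_[p]) :=
  {g | ∀ i j, (p : ℤ_[p]) ^ t ∣
    ((g : Matrix (Fin n) (Fin n) ℤ_[p]) i j - (1 : Matrix (Fin n) (Fin n) ℤ_[p]) i j)}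

section AuxiliaryLemmas
open Matrix




section

variable {p n : ℕ} [Fact p.Prime]

lemma continuous_coeSL :
    Continuous (fun g : Matrix.SpecialLinearGroup (Fin n) ℤ_[p] =>
      (g : Matrix (Fin n) (Fin n) ℤ_[p])) :=
  continuous_induced_dom

instance : IsTopologicalGroup (Matrix.SpecialLinearGroup (Fin n) ℤ_[p]) where
  continuous_mul := by
    apply continuous_induced_rng.2
    exact ((continuous_coeSL.comp continuous_fst).matrix_mul
      (continuous_coeSL.comp continuous_snd))
  continuous_inv := by
    apply continuous_induced_rng.2
    show Continuous fun g : Matrix.SpecialLinearGroup (Fin n) ℤ_[p] =>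
      ((g⁻¹ : Matrix.SpecialLinearGroup (Fin n) ℤ_[p]) : Matrix (Fin n) (Fin n) ℤ_[p])
    have : (fun g : Matrix.SpecialLinearGroup (Fin n) ℤ_[p] =>
        ((g⁻¹ : Matrix.SpecialLinearGroup (Fin n) ℤ_[p]) : Matrix (Fin n) (Fin n) ℤ_[p]))
        = fun g : Matrix.SpecialLinearGroup (Fin n) ℤ_[p] =>
          ((g : Matrix (Fin n) (Fin n) ℤ_[p]).adjugate) := by
      funext g; exact Matrix.SpecialLinearGroup.coe_inv g
    rw [this]
    exact continuous_coeSL.matrix_adjugate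

/-- transvection as an element of `SL_n`. -/
def tSL {R : Type*} [CommRing R] {i j : Fin n} (hij : i ≠ j) (c : R) :
    Matrix.SpecialLinearGroup (Fin n) R :=
  ⟨Matrix.transvection i j c, Matrix.det_transvection_of_ne i j hij c⟩

lemma tSL_mul {R : Type*} [CommRing R] {i j : Fin n} (hij : i ≠ j) (c d : R) :
    tSL hij c * tSL hij d = tSL hij (c + d) :=
  Subtype.ext (Matrix.transvection_mul_transvection_same i j hij c d)

lemma tSL_pow {R : Type*} [CommRing R] {i j : Fin n} (hij : i ≠ j) (c : R) (m : ℕ) :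
    (tSL hij c) ^ m = tSL hij (m * c) := by
  induction m with
  | zero => simp only [pow_zero, Nat.cast_zero, zero_mul]
            exact Subtype.ext (Matrix.transvection_zero i j).symm
  | succ m ih =>
      rw [pow_succ, ih, tSL_mul]
      congr 1
      push_cast
      ring

lemma continuous_tSL {i j : Fin n} (hij : i ≠ j) :
    Continuous (fun c : ℤ_[p] => tSL (n := n) hij c) := by
  apply continuous_induced_rng.2
  show Continuous fun c : ℤ_[p] => Matrix.transvection i j c
  apply continuous_matrix
  intro a b
  simp only [Matrix.transvection, Matrix.add_apply, Matrix.single, Matrix.of_apply]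
  by_cases h : i = a ∧ j = b
  · simpa [h] using (continuous_add_left ((1 : Matrix (Fin n) (Fin n) ℤ_[p]) a b))
  · simpa [h] using continuous_const


lemma isUnit_of_dvd_sub_one {t : ℕ} (ht : 1 ≤ t) {x : ℤ_[p]} (h : (p : ℤ_[p]) ^ t ∣ x - 1) :
    IsUnit x := by
  obtain ⟨z, hz⟩ := h
  have hplt : ‖(p:ℤ_[p])‖ < 1 := by
    rw [PadicInt.norm_p]
    have hp : 1 < (p:ℝ) := by exact_mod_cast (Fact.out : p.Prime).one_lt
    rw [inv_lt_one_iff₀]; right; exact hp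
  have hlt : ‖x - 1‖ < 1 := by
    rw [hz, norm_mul, norm_pow]
    calc ‖(p:ℤ_[p])‖ ^ t * ‖z‖ ≤ ‖(p:ℤ_[p])‖ ^ t * 1 :=
          mul_le_mul_of_nonneg_left (PadicInt.norm_le_one z) (by positivity)
      _ = ‖(p:ℤ_[p])‖ ^ t := mul_one _
      _ < 1 := pow_lt_one₀ (norm_nonneg _) hplt (by omega)
  rw [PadicInt.isUnit_iff]
  by_contra hne
  have hle : ‖x‖ < 1 := lt_of_le_of_ne (PadicInt.norm_le_one x) hne
  have h2 := PadicInt.nonarchimedean x (-(x-1))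
  have hx1 : x + -(x - 1) = 1 := by ring
  rw [hx1, norm_one] at h2
  have h3 : ‖-(x-1)‖ < 1 := by rw [norm_neg]; exact hlt
  have := max_lt hle h3
  linarith

lemma natCast_dvd_pow_p {N t : ℕ} (hN : 0 < N) (hNt : N ≤ t) :
    (N : ℤ_[p]) ∣ (p : ℤ_[p]) ^ t := by
  have hp : p.Prime := Fact.out
  set a := N.factorization p with ha
  have hfact : p ^ a * (N / p ^ a) = N := Nat.ordProj_mul_ordCompl_eq_self N p
  have hndvd : ¬ p ∣ (N / p ^ a) := Nat.not_dvd_ordCompl hp hN.ne'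
  have hunit : IsUnit ((N / p ^ a : ℕ) : ℤ_[p]) := by
    rw [PadicInt.isUnit_iff]
    refine le_antisymm (PadicInt.norm_le_one _) ?_
    by_contra hlt
    push_neg at hlt
    have hcast : ((N / p ^ a : ℕ) : ℤ_[p]) = ((N / p ^ a : ℤ) : ℤ_[p]) := by norm_cast
    rw [hcast, PadicInt.norm_int_lt_one_iff_dvd] at hlt
    exact hndvd (by exact_mod_cast hlt)
  have haN : a ≤ t := by
    have h1 : p ^ a ≤ N := Nat.ordProj_le p hN.ne'
    have h2 : a < p ^ a := Nat.lt_pow_self (n := a) hp.one_lt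
    omega
  obtain ⟨u, hu⟩ := hunit
  refine ⟨(↑u⁻¹ : ℤ_[p]) * (p:ℤ_[p])^(t-a), ?_⟩
  have hNeq : (N:ℤ_[p]) = (p:ℤ_[p])^a * u := by
    rw [hu, ← Nat.cast_pow, ← Nat.cast_mul, hfact]
  have hteq : (p:ℤ_[p])^t = (p:ℤ_[p])^a * (p:ℤ_[p])^(t-a) := by
    rw [← pow_add, Nat.add_sub_cancel' haN]
  rw [hteq, hNeq, mul_assoc, ← mul_assoc (u:ℤ_[p]), u.mul_inv, one_mul]


lemma exists_pow_root {N t : ℕ} (hN : 1 ≤ N) (hlt : N ^ 2 < p ^ t) {u : ℤ_[p]}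
    (hu : (p : ℤ_[p]) ^ t ∣ u - 1) : ∃ v : ℤ_[p], v ^ N = u ∧ IsUnit v := by
  have hp : p.Prime := Fact.out
  set F : Polynomial ℤ_[p] := Polynomial.X ^ N - Polynomial.C u with hF
  have heval : F.eval 1 = 1 - u := by simp [hF]
  have hderiv : F.derivative.eval 1 = (N : ℤ_[p]) := by
    simp [hF, Polynomial.derivative_X_pow]
  have h1 : ‖F.eval 1‖ ≤ (p : ℝ) ^ (-(t:ℤ)) := by
    rw [heval, PadicInt.norm_le_pow_iff_mem_span_pow, Ideal.mem_span_singleton]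
    rw [← neg_sub]
    exact (dvd_neg.mpr hu)
  have h2 : (p : ℝ) ^ (-(t:ℤ)) < ‖F.derivative.eval 1‖ ^ 2 := by
    rw [hderiv]
    by_contra hcon
    push_neg at hcon
    have hsq : ‖(N:ℤ_[p])‖ ^ 2 = ‖((N^2 : ℤ) : ℤ_[p])‖ := by
      push_cast
      rw [pow_two, pow_two, norm_mul]
    rw [hsq, PadicInt.norm_int_le_pow_iff_dvd] at hcon
    have := Int.le_of_dvd (by positivity) hcon
    have hcast : (p:ℤ)^t ≤ (N:ℤ)^2 := this
    exact absurd (by exact_mod_cast hcast) (not_le.mpr hlt)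
  have hcond : ‖F.eval 1‖ < ‖F.derivative.eval 1‖ ^ 2 := lt_of_le_of_lt h1 h2
  obtain ⟨z, hz, -, -, -⟩ := hensels_lemma hcond
  have hzN : z ^ N = u := by
    have h0 : z ^ N - u = 0 := by simpa [hF] using hz
    exact sub_eq_zero.mp h0
  refine ⟨z, hzN, ?_⟩
  have ht : 1 ≤ t := by
    rcases Nat.eq_zero_or_pos t with rfl | h
    · simp at hlt; omega
    · exact h
  have hUu : IsUnit u := isUnit_of_dvd_sub_one ht hu
  have hzd : z ∣ u := hzN ▸ dvd_pow_self z (by omega)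
  exact isUnit_of_dvd_unit hzd hUu

variable {R : Type*} [CommRing R]

def dFun (i j : Fin n) (v w : R) : Fin n → R :=
  Function.update (Function.update (1 : Fin n → R) i v) j w

lemma dFun_mul {i j : Fin n} (hij : i ≠ j) (v w v' w' : R) :
    dFun i j v w * dFun i j v' w' = dFun i j (v * v') (w * w') := by
  funext a
  by_cases haj : a = j
  · subst haj; simp [dFun]
  · by_cases hai : a = i
    · subst hai; simp [dFun, Function.update_of_ne haj, Function.update_of_ne hij]
    · simp [dFun, Function.update_of_ne haj, Function.update_of_ne hai]

lemma dFun_det {i j : Fin n} (hij : i ≠ j) (v w : R) :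
    (Matrix.diagonal (dFun i j v w)).det = v * w := by
  rw [Matrix.det_diagonal, dFun]
  rw [Finset.prod_update_of_mem (Finset.mem_univ j)]
  rw [Finset.prod_update_of_mem (by simp [hij] : i ∈ Finset.univ \ {j})]
  simp [mul_comm]

def dSL {i j : Fin n} (hij : i ≠ j) (v w : R) (hvw : v * w = 1) :
    Matrix.SpecialLinearGroup (Fin n) R :=
  ⟨Matrix.diagonal (dFun i j v w), by rw [dFun_det hij]; exact hvw⟩

lemma dSL_mul {i j : Fin n} (hij : i ≠ j) (v w v' w' : R) (h1 : v * w = 1) (h2 : v' * w' = 1) :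
    dSL hij v w h1 * dSL hij v' w' h2
      = dSL hij (v * v') (w * w') (by rw [mul_mul_mul_comm, h1, h2, one_mul]) := by
  apply Subtype.ext
  show Matrix.diagonal _ * Matrix.diagonal _ = Matrix.diagonal _
  rw [Matrix.diagonal_mul_diagonal]
  exact congrArg Matrix.diagonal (dFun_mul hij v w v' w')

lemma dSL_pow {i j : Fin n} (hij : i ≠ j) (v w : R) (h1 : v * w = 1) (m : ℕ) :
    (dSL hij v w h1) ^ m = dSL hij (v ^ m) (w ^ m) (by rw [← mul_pow, h1, one_pow]) := by
  induction m with
  | zero =>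
      apply Subtype.ext
      show (1 : Matrix.SpecialLinearGroup (Fin n) R).val = _
      show (1 : Matrix (Fin n) (Fin n) R) = Matrix.diagonal _
      have : dFun i j (v^0) (w^0) = fun _ => 1 := by
        funext a; by_cases haj : a = j
        · subst haj; simp [dFun]
        · by_cases hai : a = i
          · subst hai; simp [dFun, Function.update_of_ne hij]
          · simp [dFun, Function.update_of_ne haj, Function.update_of_ne hai]
      rw [this, Matrix.diagonal_one]
      
  | succ m ih =>
      rw [pow_succ, ih, dSL_mul hij]
      apply Subtype.ext
      show Matrix.diagonal (dFun i j (v^m*v) (w^m*w)) = Matrix.diagonal (dFun i j (v^(m+1)) (w^(m+1)))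
      rw [pow_succ, pow_succ]

lemma whitehead {i j : Fin n} (hij : i ≠ j) (v w : R) (hvw : v * w = 1) :
    tSL hij.symm (w - 1) * tSL hij 1 * tSL hij.symm (v - 1) * tSL hij (-w)
      = dSL hij v w hvw := by
  apply Subtype.ext
  show Matrix.transvection j i (w - 1) * Matrix.transvection i j 1 *
      Matrix.transvection j i (v - 1) * Matrix.transvection i j (-w)
      = Matrix.diagonal (dFun i j v w)
  ext a b
  by_cases hai : a = i <;> by_cases haj : a = j <;>
    by_cases hbi : b = i <;> by_cases hbj : b = j <;>
    [skip; skip; skip; skip; skip; skip; skip; skip; skip; skip; skip; skip;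
     skip; skip; skip; skip] <;>
  (try exact absurd (hai.symm.trans haj) hij) <;>
  (try exact absurd (hbi.symm.trans hbj) hij) <;>
  simp [Matrix.transvection, mul_add, add_mul, Matrix.add_apply,
    Matrix.one_apply, Matrix.single_mul_single_same, Matrix.single_mul_single_of_ne,
    Matrix.single_apply_same, Matrix.single_apply_of_ne,
    Matrix.diagonal_apply, dFun, Function.update, hai, haj, hbi, hbj, hij, hij.symm, eq_comm] <;>
  (try simp [Matrix.single_apply_of_ne, Ne.symm hbj, Ne.symm hbi, hij, hij.symm]) <;>
  (try simp [Matrix.single_apply_of_ne, Ne.symm hbj, hij, hij.symm]) <;>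
  (try simp [Matrix.single_apply_of_ne, Ne.symm hbi, hij, hij.symm]) <;>
  (try simp [Matrix.single_apply_of_ne, Ne.symm hai, Ne.symm haj, hij, hij.symm]) <;>
  (try simp [Matrix.single_apply_of_ne, Ne.symm hai, hij, hij.symm]) <;>
  (try simp [Matrix.single_apply_of_ne, Ne.symm haj, hij, hij.symm]) <;>
  (try linear_combination hvw) <;> (try linear_combination -hvw) <;>
  (try linear_combination w * hvw) <;> (try linear_combination (-w) * hvw) <;>
  (try linear_combination v * hvw) <;> (try linear_combination (-v) * hvw)

lemma map_tSL {p n : ℕ} [Fact p.Prime] {i j : Fin n} (hij : i ≠ j) (m : ℤ) :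
    Matrix.SpecialLinearGroup.map (Int.castRingHom ℤ_[p]) (tSL hij m)
      = tSL hij ((m : ℤ_[p])) := by
  apply Subtype.ext
  show ((Matrix.transvection i j (m:ℤ)).map (Int.castRingHom ℤ_[p] : ℤ → ℤ_[p]))
      = Matrix.transvection i j ((m : ℤ_[p]))
  ext a b
  simp only [Matrix.map_apply, Matrix.transvection, Matrix.add_apply, Matrix.one_apply,
    Matrix.single, Matrix.of_apply]
  split_ifs <;> simp [Int.cast_one, Int.cast_add, map_ofNat]

end

section
variable (p n : ℕ) [Fact p.Prime]

/-- closure of the image of all of `SL_n(ℤ)`. -/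
noncomputable def KbarSub : Subgroup (Matrix.SpecialLinearGroup (Fin n) ℤ_[p]) :=
  ((⊤ : Subgroup (Matrix.SpecialLinearGroup (Fin n) ℤ)).map (iotaSL p n)).topologicalClosure

/-- closure of the image of `Γ`. -/
noncomputable def HbarSub (Γ : Subgroup (Matrix.SpecialLinearGroup (Fin n) ℤ)) :
    Subgroup (Matrix.SpecialLinearGroup (Fin n) ℤ_[p]) :=
  (Γ.map (iotaSL p n)).topologicalClosure

variable {p n}

lemma tSL_mem_Kbar {i j : Fin n} (hij : i ≠ j) (c : ℤ_[p]) :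
    tSL hij c ∈ KbarSub p n := by
  have hc : Continuous (fun c : ℤ_[p] => tSL (n := n) hij c) := continuous_tSL hij
  have h1 : c ∈ closure (Set.range (Int.cast : ℤ → ℤ_[p])) := by
    rw [PadicInt.denseRange_intCast.closure_range]; trivial
  have h2 : tSL hij c ∈
      closure ((fun c : ℤ_[p] => tSL (n := n) hij c) '' (Set.range (Int.cast : ℤ → ℤ_[p]))) :=
    image_closure_subset_closure_image hc ⟨c, h1, rfl⟩
  have h3 : ((fun c : ℤ_[p] => tSL (n := n) hij c) '' (Set.range (Int.cast : ℤ → ℤ_[p])))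
      ⊆ (((⊤ : Subgroup (Matrix.SpecialLinearGroup (Fin n) ℤ)).map (iotaSL p n)) :
          Set (Matrix.SpecialLinearGroup (Fin n) ℤ_[p])) := by
    rintro _ ⟨_, ⟨m, rfl⟩, rfl⟩
    exact ⟨tSL hij m, trivial, map_tSL hij m⟩
  show tSL hij c ∈ (((⊤ : Subgroup _).map (iotaSL p n)).topologicalClosure :
    Subgroup (Matrix.SpecialLinearGroup (Fin n) ℤ_[p]))
  have : tSL hij c ∈ closure ((((⊤ : Subgroup (Matrix.SpecialLinearGroup (Fin n) ℤ)).map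
      (iotaSL p n))) : Set (Matrix.SpecialLinearGroup (Fin n) ℤ_[p])) :=
    closure_mono h3 h2
  exact this

lemma pow_mem_Hbar (Γ : Subgroup (Matrix.SpecialLinearGroup (Fin n) ℤ))
    {x : Matrix.SpecialLinearGroup (Fin n) ℤ_[p]} (hx : x ∈ KbarSub p n) :
    x ^ (Γ.normalCore.index) ∈ HbarSub p n Γ := by
  set N := Γ.normalCore.index
  have hcont : Continuous (fun y : Matrix.SpecialLinearGroup (Fin n) ℤ_[p] => y ^ N) :=
    continuous_pow N
  have hx' : x ∈ closure ((((⊤ : Subgroup (Matrix.SpecialLinearGroup (Fin n) ℤ)).map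
      (iotaSL p n))) : Set (Matrix.SpecialLinearGroup (Fin n) ℤ_[p])) := hx
  have h2 := image_closure_subset_closure_image hcont ⟨x, hx', rfl⟩
  have h3 : ((fun y : Matrix.SpecialLinearGroup (Fin n) ℤ_[p] => y ^ N) ''
        (((⊤ : Subgroup (Matrix.SpecialLinearGroup (Fin n) ℤ)).map (iotaSL p n)) : Set _))
      ⊆ ((Γ.map (iotaSL p n)) : Set (Matrix.SpecialLinearGroup (Fin n) ℤ_[p])) := by
    rintro _ ⟨_, ⟨γ, -, rfl⟩, rfl⟩
    refine ⟨γ ^ N, ?_, by rw [map_pow]⟩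
    exact Subgroup.normalCore_le Γ (Subgroup.pow_index_mem Γ.normalCore γ)
  exact closure_mono h3 h2

lemma tSL_mem_Hbar (Γ : Subgroup (Matrix.SpecialLinearGroup (Fin n) ℤ))
    {i j : Fin n} (hij : i ≠ j) {c : ℤ_[p]}
    (hc : ((Γ.normalCore.index : ℕ) : ℤ_[p]) ∣ c) :
    tSL hij c ∈ HbarSub p n Γ := by
  obtain ⟨y, rfl⟩ := hc
  rw [show ((Γ.normalCore.index : ℕ) : ℤ_[p]) * y = ((Γ.normalCore.index : ℕ) : ℤ_[p]) * y from rfl,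
    ← tSL_pow hij y]
  exact pow_mem_Hbar Γ (tSL_mem_Kbar hij y)

lemma dSL_mem_Kbar {i j : Fin n} (hij : i ≠ j) (v w : ℤ_[p]) (hvw : v * w = 1) :
    dSL hij v w hvw ∈ KbarSub p n := by
  rw [← whitehead hij v w hvw]
  exact mul_mem (mul_mem (mul_mem (tSL_mem_Kbar hij.symm _) (tSL_mem_Kbar hij _))
    (tSL_mem_Kbar hij.symm _)) (tSL_mem_Kbar hij _)

end
section
variable {p n : ℕ} [Fact p.Prime]

lemma congSetP_mul {t : ℕ} {g h : Matrix.SpecialLinearGroup (Fin n) ℤ_[p]}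
    (hg : g ∈ congSetP p n t) (hh : h ∈ congSetP p n t) : g * h ∈ congSetP p n t := by
  intro i j
  have hident : (g.val * h.val - 1) = (g.val - 1) * h.val + (h.val - 1) := by noncomm_ring
  have hentry : (g * h : Matrix.SpecialLinearGroup (Fin n) ℤ_[p]).val i j
      - (1 : Matrix (Fin n) (Fin n) ℤ_[p]) i j
      = ((g.val - 1) * h.val) i j + (h.val - 1) i j := by
    have : (g * h : Matrix.SpecialLinearGroup (Fin n) ℤ_[p]).val = g.val * h.val := rfl
    rw [this, ← Matrix.add_apply, ← hident, Matrix.sub_apply]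
  rw [hentry]
  apply dvd_add
  · rw [Matrix.mul_apply]
    refine Finset.dvd_sum fun l _ => ?_
    exact Dvd.dvd.mul_right (by simpa [Matrix.sub_apply] using hg i l) _
  · simpa [Matrix.sub_apply] using hh i j

lemma congSetP_tSL {t : ℕ} {i j : Fin n} (hij : i ≠ j) {c : ℤ_[p]}
    (hc : (p : ℤ_[p]) ^ t ∣ c) : tSL hij c ∈ congSetP p n t := by
  intro a b
  have : (tSL hij c).val a b = (1 : Matrix (Fin n) (Fin n) ℤ_[p]) a b
      + Matrix.single i j c a b := rfl
  rw [this, add_sub_cancel_left]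
  by_cases h : i = a ∧ j = b
  · rw [h.1, h.2, Matrix.single_apply_same]; exact hc
  · rw [Matrix.single_apply_of_ne i j c a b h]; exact dvd_zero _

lemma congSetP_dSL {t : ℕ} {i j : Fin n} (hij : i ≠ j) {v w : ℤ_[p]} (hvw : v * w = 1)
    (hv : (p : ℤ_[p]) ^ t ∣ v - 1) (hw : (p : ℤ_[p]) ^ t ∣ w - 1) :
    dSL hij v w hvw ∈ congSetP p n t := by
  intro a b
  have : (dSL hij v w hvw).val a b = Matrix.diagonal (dFun i j v w) a b := rfl
  rw [this]
  by_cases hab : a = b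
  · subst hab
    rw [Matrix.diagonal_apply_eq, Matrix.one_apply_eq]
    by_cases haj : a = j
    · subst haj; simpa [dFun] using hw
    · by_cases hai : a = i
      · subst hai; simpa [dFun, Function.update_of_ne haj] using hv
      · simp [dFun, Function.update_of_ne haj, Function.update_of_ne hai]
  · rw [Matrix.diagonal_apply_ne _ hab, Matrix.one_apply_ne hab, sub_zero]
    exact dvd_zero _

lemma dSL_one {i j : Fin n} (hij : i ≠ j) :
    dSL hij (1 : ℤ_[p]) 1 (one_mul 1) = 1 := by
  apply Subtype.ext
  show Matrix.diagonal (dFun i j 1 1) = 1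
  have : dFun i j (1:ℤ_[p]) 1 = fun _ => 1 := by
    funext a
    by_cases haj : a = j
    · subst haj; simp [dFun]
    · by_cases hai : a = i
      · subst hai; simp [dFun, Function.update_of_ne hij]
      · simp [dFun, Function.update_of_ne haj, Function.update_of_ne hai]
  rw [this, Matrix.diagonal_one]

lemma diag_mem_Hbar (Γ : Subgroup (Matrix.SpecialLinearGroup (Fin n) ℤ)) {t : ℕ} (ht : 1 ≤ t)
    (hroot : ∀ u : ℤ_[p], (p:ℤ_[p])^t ∣ u - 1 →
      ∃ v : ℤ_[p], v ^ (Γ.normalCore.index) = u ∧ IsUnit v) :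
    ∀ (m : ℕ) (d : Matrix.SpecialLinearGroup (Fin n) ℤ_[p]), d ∈ congSetP p n t →
      (∀ i j : Fin n, i ≠ j → d.val i j = 0) →
      (∀ i : Fin n, (i : ℕ) + m < n → d.val i i = 1) →
      d ∈ HbarSub p n Γ := by
  set N := Γ.normalCore.index with hN
  intro m
  induction m with
  | zero =>
    intro d _ hoff hdiag
    have : d = 1 := by
      apply Subtype.ext
      rw [Matrix.SpecialLinearGroup.coe_one]
      ext a b
      by_cases hab : a = b
      · subst hab
        rw [Matrix.one_apply_eq]
        exact hdiag a (by omega)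
      · rw [Matrix.one_apply_ne hab]
        exact hoff a b hab
    rw [this]; exact one_mem _
  | succ m ih =>
    intro d hd hoff hdiag
    by_cases hm : n ≤ m
    · exact ih d hd hoff (fun i hi => absurd hi (by omega))
    · push_neg at hm
      set q : ℕ := n - 1 - m with hqdef
      have hq : q < n := by omega
      by_cases hqlast : q + 1 = n
      · -- only the last diagonal entry is possibly ≠ 1; determinant forces it to be 1
        have hallbutlast : ∀ i : Fin n, (i:ℕ) ≠ q → d.val i i = 1 := by
          intro i hi
          apply hdiag
          have : (i:ℕ) < n := i.2
          omega
        have hdiagmat : d.val = Matrix.diagonal (fun i => d.val i i) := by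
          ext a b
          by_cases hab : a = b
          · subst hab; rw [Matrix.diagonal_apply_eq]
          · rw [Matrix.diagonal_apply_ne _ hab]; exact hoff a b hab
        have hdet : (d.val).det = 1 := d.2
        have hprod : ∏ i : Fin n, d.val i i = 1 := by
          rw [hdiagmat, Matrix.det_diagonal] at hdet
          exact hdet
        have hlast : d.val ⟨q, hq⟩ ⟨q, hq⟩ = 1 := by
          have := Finset.prod_eq_single_of_mem (M := ℤ_[p]) (f := fun i : Fin n => d.val i i)
            (⟨q, hq⟩ : Fin n) (Finset.mem_univ _) ?_
          · rw [this] at hprod; exact hprod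
          · intro b _ hb
            apply hallbutlast
            intro hbq
            exact hb (by apply Fin.ext; exact hbq)
        have : d = 1 := by
          apply Subtype.ext
          rw [Matrix.SpecialLinearGroup.coe_one]
          ext a b
          by_cases hab : a = b
          · subst hab
            rw [Matrix.one_apply_eq]
            by_cases haq : (a:ℕ) = q
            · have : a = (⟨q, hq⟩ : Fin n) := by apply Fin.ext; exact haq
              rw [this]; exact hlast
            · exact hallbutlast a haq
          · rw [Matrix.one_apply_ne hab]; exact hoff a b hab
        rw [this]; exact one_mem _
      · have hq1 : q + 1 < n := by omega
        set qF : Fin n := ⟨q, hq⟩ with hqF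
        set qF' : Fin n := ⟨q+1, hq1⟩ with hqF'
        have hne : qF ≠ qF' := by
          intro h
          have := congrArg Fin.val h
          simp [hqF, hqF'] at this
        set u : ℤ_[p] := d.val qF qF with hu
        have hucong : (p:ℤ_[p])^t ∣ u - 1 := by
          have := hd qF qF
          rwa [Matrix.one_apply_eq] at this
        obtain ⟨v, hvN, hvunit⟩ := hroot u hucong
        obtain ⟨vu, hvu⟩ := hvunit
        set w : ℤ_[p] := ((vu⁻¹ : ℤ_[p]ˣ) : ℤ_[p]) with hw
        have hvw : v * w = 1 := by rw [← hvu, hw]; exact vu.mul_inv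
        have hwv : w * v = 1 := by rw [mul_comm]; exact hvw
        have hwNu : w ^ N * u = 1 := by
          rw [← hvN, ← mul_pow, hwv, one_pow]
        have hvwN : v ^ N * w ^ N = 1 := by rw [← mul_pow, hvw, one_pow]
        have hwvN : w ^ N * v ^ N = 1 := by rw [← mul_pow, hwv, one_pow]
        -- the correction matrix and its membership
        have hDK : dSL hne v w hvw ∈ KbarSub p n := dSL_mem_Kbar hne v w hvw
        have hDN := pow_mem_Hbar Γ hDK
        rw [dSL_pow] at hDN
        -- congruences for v^N and w^N
        have hvNc : (p:ℤ_[p])^t ∣ v ^ N - 1 := by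
          rw [hvN]; exact hucong
        have hwNc : (p:ℤ_[p])^t ∣ w ^ N - 1 := by
          have heq : w ^ N - 1 = (-(w^N)) * (u - 1) := by
            have : w ^ N * u = 1 := hwNu
            linear_combination this
          rw [heq]
          exact Dvd.dvd.mul_left hucong _
        -- d' = dSL (w^N) (v^N) * d
        set d' := dSL hne (w^N) (v^N) hwvN * d with hd'
        have hd'cong : d' ∈ congSetP p n t :=
          congSetP_mul (congSetP_dSL hne hwvN hwNc hvNc) hd
        have hd'entry : ∀ a b : Fin n, d'.val a b
            = dFun qF qF' (w^N) (v^N) a * d.val a b := by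
          intro a b
          have : d'.val = Matrix.diagonal (dFun qF qF' (w^N) (v^N)) * d.val := rfl
          rw [this, Matrix.diagonal_mul]
        have hd'off : ∀ i j : Fin n, i ≠ j → d'.val i j = 0 := by
          intro i j hij
          rw [hd'entry, hoff i j hij, mul_zero]
        have hd'diag : ∀ i : Fin n, (i:ℕ) + m < n → d'.val i i = 1 := by
          intro i hi
          rw [hd'entry]
          by_cases hiq : i = qF
          · subst hiq
            have : dFun qF qF' (w^N) (v^N) qF = w^N := by
              simp [dFun, Function.update_of_ne hne]
            rw [this, ← hu]
            exact hwNu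
          · have hiq' : i ≠ qF' := by
              intro h
              apply absurd hi
              rw [h]
              simp [hqF']
              omega
            have : dFun qF qF' (w^N) (v^N) i = 1 := by
              simp [dFun, Function.update_of_ne hiq', Function.update_of_ne hiq]
            rw [this, one_mul]
            apply hdiag
            have hlt : (i:ℕ) < q := by
              rcases Nat.lt_or_ge (i:ℕ) q with h | h
              · exact h
              · exfalso
                have h1 : (i:ℕ) ≠ q := fun hh => hiq (Fin.ext hh)
                have h2 : (i:ℕ) ≠ q + 1 := fun hh => hiq' (Fin.ext hh)
                omega
            omega
        have hd'mem : d' ∈ HbarSub p n Γ := ih d' hd'cong hd'off hd'diag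
        have hrecover : d = dSL hne (v^N) (w^N) hvwN * d' := by
          rw [hd', ← mul_assoc, dSL_mul hne]
          have h1 : dSL hne (v ^ N * w ^ N) (w ^ N * v ^ N)
              (by rw [mul_mul_mul_comm, hvwN, hwvN, one_mul]) = 1 := by
            have e1 : v ^ N * w ^ N = 1 := hvwN
            have e2 : w ^ N * v ^ N = 1 := hwvN
            apply Subtype.ext
            show Matrix.diagonal (dFun qF qF' (v ^ N * w ^ N) (w ^ N * v ^ N)) = 1
            rw [e1, e2]
            have := congrArg Subtype.val (dSL_one (p := p) hne)
            exact this
          rw [h1, one_mul]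
        rw [hrecover]
        exact mul_mem hDN hd'mem

end
section
variable {p n : ℕ} [Fact p.Prime]

lemma elim_inner (Γ : Subgroup (Matrix.SpecialLinearGroup (Fin n) ℤ)) {t k : ℕ} (ht : 1 ≤ t)
    (htmem : ∀ (i j : Fin n) (hij : i ≠ j) (c : ℤ_[p]),
      (p:ℤ_[p])^t ∣ c → tSL hij c ∈ HbarSub p n Γ)
    (IH : ∀ g ∈ congSetP p n t,
      (∀ i j : Fin n, i ≠ j → min (i:ℕ) (j:ℕ) < k + 1 → g.val i j = 0) → g ∈ HbarSub p n Γ) :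
    ∀ (c : ℕ) (g : Matrix.SpecialLinearGroup (Fin n) ℤ_[p]), g ∈ congSetP p n t →
      (∀ i j : Fin n, i ≠ j → min (i:ℕ) (j:ℕ) < k → g.val i j = 0) →
      ({q : Fin n × Fin n | q.1 ≠ q.2 ∧ min (q.1:ℕ) (q.2:ℕ) = k ∧ g.val q.1 q.2 ≠ 0}).ncard ≤ c →
      g ∈ HbarSub p n Γ := by
  intro c
  induction c with
  | zero =>
    intro g hg hz hcard
    apply IH g hg
    intro i j hij hlt
    rcases Nat.lt_or_ge (min (i:ℕ) (j:ℕ)) k with h | h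
    · exact hz i j hij h
    · have hmin : min (i:ℕ) (j:ℕ) = k := by omega
      by_contra hne
      have hmem : ((i, j) : Fin n × Fin n) ∈
          {q : Fin n × Fin n | q.1 ≠ q.2 ∧ min (q.1:ℕ) (q.2:ℕ) = k ∧ g.val q.1 q.2 ≠ 0} :=
        ⟨hij, hmin, hne⟩
      have hpos : 0 < ({q : Fin n × Fin n | q.1 ≠ q.2 ∧ min (q.1:ℕ) (q.2:ℕ) = k ∧
          g.val q.1 q.2 ≠ 0}).ncard := by
        rw [Set.ncard_pos (Set.toFinite _)]
        exact ⟨_, hmem⟩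
      omega
  | succ c ihc =>
    intro g hg hz hcard
    set S := {q : Fin n × Fin n | q.1 ≠ q.2 ∧ min (q.1:ℕ) (q.2:ℕ) = k ∧ g.val q.1 q.2 ≠ 0}
      with hS
    by_cases hle : S.ncard ≤ c
    · exact ihc g hg hz hle
    · have hSne : S.Nonempty := by
        rw [Set.nonempty_iff_ne_empty]
        intro h
        rw [h, Set.ncard_empty] at hle
        omega
      obtain ⟨⟨i, j⟩, hijne0, hmin0, hgne0⟩ := hSne
      have hijne : i ≠ j := hijne0
      have hmin : min (i:ℕ) (j:ℕ) = k := hmin0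
      have hgne : g.val i j ≠ 0 := hgne0
      have hvalne : (i:ℕ) ≠ (j:ℕ) := fun h => hijne (Fin.ext h)
      rcases (by omega : ((j:ℕ) = k ∧ k < (i:ℕ)) ∨ ((i:ℕ) = k ∧ k < (j:ℕ))) with
        ⟨hjk, hik⟩ | ⟨hik, hjk⟩
      · -- row operation: row i += cc * row j, pivot g j j
        have hupiv : IsUnit (g.val j j) := by
          apply isUnit_of_dvd_sub_one (p := p) ht
          have := hg j j
          rwa [Matrix.one_apply_eq] at this
        obtain ⟨u, hu⟩ := hupiv
        set cc : ℤ_[p] := -(g.val i j) * ((u⁻¹ : ℤ_[p]ˣ) : ℤ_[p]) with hcc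
        have hdvdgij : (p:ℤ_[p])^t ∣ g.val i j := by
          have := hg i j
          rwa [Matrix.one_apply_ne hijne, sub_zero] at this
        have hccdvd : (p:ℤ_[p])^t ∣ cc := (dvd_neg.mpr hdvdgij).mul_right _
        set T := tSL hijne cc with hT
        set g' := T * g with hg'
        have hg'val : g'.val = Matrix.transvection i j cc * g.val := rfl
        have hg'cong : g' ∈ congSetP p n t := congSetP_mul (congSetP_tSL hijne hccdvd) hg
        have hg'ij : g'.val i j = 0 := by
          rw [hg'val, Matrix.transvection_mul_apply_same]
          rw [hcc, ← hu]
          have : ((u⁻¹ : ℤ_[p]ˣ) : ℤ_[p]) * (u : ℤ_[p]) = 1 := u.inv_mul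
          linear_combination (-(g.val i j)) * this
        have hg'z : ∀ a b : Fin n, a ≠ b → min (a:ℕ) (b:ℕ) < k → g'.val a b = 0 := by
          intro a b hab hlt
          rcases eq_or_ne a i with rfl | hai
          · rw [hg'val, Matrix.transvection_mul_apply_same]
            have hbk : (b:ℕ) < k := by omega
            have h1 : g.val a b = 0 := hz a b hab (by omega)
            have h2 : g.val j b = 0 := by
              apply hz j b
              · intro h; rw [h] at hjk; omega
              · omega
            rw [h1, h2, mul_zero, add_zero]
          · rw [hg'val, Matrix.transvection_mul_apply_of_ne _ _ _ _ hai]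
            exact hz a b hab hlt
        have hsub : {q : Fin n × Fin n | q.1 ≠ q.2 ∧ min (q.1:ℕ) (q.2:ℕ) = k ∧
            g'.val q.1 q.2 ≠ 0} ⊆ S \ {(i, j)} := by
          rintro ⟨a, b⟩ ⟨hab0, habmin0, habne0⟩
          have hab : a ≠ b := hab0
          have habmin : min (a:ℕ) (b:ℕ) = k := habmin0
          have habne : g'.val a b ≠ 0 := habne0
          rcases eq_or_ne a i with rfl | hai
          · have hbk : (b:ℕ) = k := by omega
            have : b = j := Fin.ext (by omega)
            subst this
            exact absurd (by rw [← hg'ij]) (fun hh => habne hh)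
          · constructor
            · refine ⟨hab, habmin, ?_⟩
              rwa [hg'val, Matrix.transvection_mul_apply_of_ne _ _ _ _ hai] at habne
            · intro hh
              rw [Set.mem_singleton_iff] at hh
              exact hai (congrArg Prod.fst hh)
        have hcard' : ({q : Fin n × Fin n | q.1 ≠ q.2 ∧ min (q.1:ℕ) (q.2:ℕ) = k ∧
            g'.val q.1 q.2 ≠ 0}).ncard ≤ c := by
          have h1 := Set.ncard_le_ncard hsub (Set.toFinite _)
          have h2 : (S \ {((i, j) : Fin n × Fin n)}).ncard = S.ncard - 1 :=
            Set.ncard_sdiff_singleton_of_mem (s := S) ⟨hijne, hmin, hgne⟩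
          have h3 : 0 < S.ncard := by
            rw [Set.ncard_pos (Set.toFinite _)]
            exact ⟨_, (⟨hijne, hmin, hgne⟩ : ((i,j) : Fin n × Fin n) ∈ S)⟩
          omega
        have hg'mem : g' ∈ HbarSub p n Γ := ihc g' hg'cong hg'z hcard'
        have : g = T⁻¹ * g' := by rw [hg', inv_mul_cancel_left]
        rw [this]
        exact mul_mem (inv_mem (htmem i j hijne cc hccdvd)) hg'mem
      · -- column operation: col j += cc * col i, pivot g i i
        have hupiv : IsUnit (g.val i i) := by
          apply isUnit_of_dvd_sub_one (p := p) ht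
          have := hg i i
          rwa [Matrix.one_apply_eq] at this
        obtain ⟨u, hu⟩ := hupiv
        set cc : ℤ_[p] := -(g.val i j) * ((u⁻¹ : ℤ_[p]ˣ) : ℤ_[p]) with hcc
        have hdvdgij : (p:ℤ_[p])^t ∣ g.val i j := by
          have := hg i j
          rwa [Matrix.one_apply_ne hijne, sub_zero] at this
        have hccdvd : (p:ℤ_[p])^t ∣ cc := (dvd_neg.mpr hdvdgij).mul_right _
        set T := tSL hijne cc with hT
        set g' := g * T with hg'
        have hg'val : g'.val = g.val * Matrix.transvection i j cc := rfl
        have hg'cong : g' ∈ congSetP p n t := congSetP_mul hg (congSetP_tSL hijne hccdvd)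
        have hg'ij : g'.val i j = 0 := by
          rw [hg'val, Matrix.mul_transvection_apply_same]
          rw [hcc, ← hu]
          have : ((u⁻¹ : ℤ_[p]ˣ) : ℤ_[p]) * (u : ℤ_[p]) = 1 := u.inv_mul
          linear_combination (-(g.val i j)) * this
        have hg'z : ∀ a b : Fin n, a ≠ b → min (a:ℕ) (b:ℕ) < k → g'.val a b = 0 := by
          intro a b hab hlt
          rcases eq_or_ne b j with rfl | hbj
          · rw [hg'val, Matrix.mul_transvection_apply_same]
            have hak : (a:ℕ) < k := by omega
            have h1 : g.val a b = 0 := hz a b hab (by omega)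
            have h2 : g.val a i = 0 := by
              apply hz a i
              · intro h; rw [← h] at hik; omega
              · omega
            rw [h1, h2, mul_zero, add_zero]
          · rw [hg'val, Matrix.mul_transvection_apply_of_ne _ _ _ _ hbj]
            exact hz a b hab hlt
        have hsub : {q : Fin n × Fin n | q.1 ≠ q.2 ∧ min (q.1:ℕ) (q.2:ℕ) = k ∧
            g'.val q.1 q.2 ≠ 0} ⊆ S \ {(i, j)} := by
          rintro ⟨a, b⟩ ⟨hab0, habmin0, habne0⟩
          have hab : a ≠ b := hab0
          have habmin : min (a:ℕ) (b:ℕ) = k := habmin0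
          have habne : g'.val a b ≠ 0 := habne0
          rcases eq_or_ne b j with rfl | hbj
          · have hak : (a:ℕ) = k := by omega
            have : a = i := Fin.ext (by omega)
            subst this
            exact absurd (by rw [← hg'ij]) (fun hh => habne hh)
          · constructor
            · refine ⟨hab, habmin, ?_⟩
              rwa [hg'val, Matrix.mul_transvection_apply_of_ne _ _ _ _ hbj] at habne
            · intro hh
              rw [Set.mem_singleton_iff] at hh
              exact hbj (congrArg Prod.snd hh)
        have hcard' : ({q : Fin n × Fin n | q.1 ≠ q.2 ∧ min (q.1:ℕ) (q.2:ℕ) = k ∧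
            g'.val q.1 q.2 ≠ 0}).ncard ≤ c := by
          have h1 := Set.ncard_le_ncard hsub (Set.toFinite _)
          have h2 : (S \ {((i, j) : Fin n × Fin n)}).ncard = S.ncard - 1 :=
            Set.ncard_sdiff_singleton_of_mem (s := S) ⟨hijne, hmin, hgne⟩
          have h3 : 0 < S.ncard := by
            rw [Set.ncard_pos (Set.toFinite _)]
            exact ⟨_, (⟨hijne, hmin, hgne⟩ : ((i,j) : Fin n × Fin n) ∈ S)⟩
          omega
        have hg'mem : g' ∈ HbarSub p n Γ := ihc g' hg'cong hg'z hcard'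
        have : g = g' * T⁻¹ := by rw [hg', mul_inv_cancel_right]
        rw [this]
        exact mul_mem hg'mem (inv_mem (htmem i j hijne cc hccdvd))

lemma elim_outer (Γ : Subgroup (Matrix.SpecialLinearGroup (Fin n) ℤ)) {t : ℕ} (ht : 1 ≤ t)
    (htmem : ∀ (i j : Fin n) (hij : i ≠ j) (c : ℤ_[p]),
      (p:ℤ_[p])^t ∣ c → tSL hij c ∈ HbarSub p n Γ)
    (hdiagmem : ∀ d ∈ congSetP p n t, (∀ i j : Fin n, i ≠ j → d.val i j = 0) →
      d ∈ HbarSub p n Γ) :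
    ∀ (r : ℕ) (g : Matrix.SpecialLinearGroup (Fin n) ℤ_[p]), g ∈ congSetP p n t →
      (∀ i j : Fin n, i ≠ j → min (i:ℕ) (j:ℕ) < n - r → g.val i j = 0) →
      g ∈ HbarSub p n Γ := by
  intro r
  induction r with
  | zero =>
    intro g hg hz
    apply hdiagmem g hg
    intro i j hij
    apply hz i j hij
    have h1 : (i:ℕ) < n := i.2
    omega
  | succ r ih =>
    intro g hg hz
    by_cases hr : n ≤ r
    · exact ih g hg (fun i j hij hlt => absurd hlt (by omega))
    · push_neg at hr
      apply elim_inner Γ ht htmem (k := n - (r+1)) ?_ (({q : Fin n × Fin n | q.1 ≠ q.2 ∧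
          min (q.1:ℕ) (q.2:ℕ) = n - (r+1) ∧ g.val q.1 q.2 ≠ 0}).ncard) g hg
          (fun i j hij hlt => hz i j hij (by omega)) le_rfl
      intro g₁ hg₁ hz₁
      apply ih g₁ hg₁
      intro i j hij hlt
      exact hz₁ i j hij (by omega)

end
end AuxiliaryLemmas

/-- **Proposition 2.1.**  For `n ≥ 3`, the closure of any finite-index subgroup
`Γ ≤ SL_n(ℤ)` in `SL_n(ℤ_p)` contains a principal congruence subgroup `K_{p^t}`;
hence every ergodic component `cl(Γ)·V` on `Gr_k(ℚ_p^n)` contains the principal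
congruence component `K_{p^t}·V`. -/
theorem closure_contains_congruence (p n : ℕ) [Fact p.Prime] (hn : 3 ≤ n)
    (Γ : Subgroup (Matrix.SpecialLinearGroup (Fin n) ℤ)) (hΓ : Γ.FiniteIndex) :
    ∃ t : ℕ, 1 ≤ t ∧
      congSetP p n t ⊆ closure ((fun γ => iotaSL p n γ) '' (Γ : Set _)) ∧
      ∀ k, k ≤ n → ∀ V : Submodule ℚ_[p] (Fin n → ℚ_[p]),
        Module.finrank ℚ_[p] V = k →
          {W | ∃ g ∈ congSetP p n t, matActP (pMat g) V = W} ⊆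
          {W | ∃ g ∈ closure ((fun γ => iotaSL p n γ) '' (Γ : Set _)),
            matActP (pMat g) V = W} := by
  classical
  haveI := hΓ
  set N := Γ.normalCore.index with hNdef
  haveI : Γ.normalCore.FiniteIndex := Subgroup.finiteIndex_normalCore Γ
  have hN1 : 1 ≤ N := Nat.one_le_iff_ne_zero.mpr Subgroup.FiniteIndex.index_ne_zero
  have h2p : 2 ≤ p := (Fact.out : p.Prime).two_le
  set t := 2 * N + 2 with htdef
  have ht1 : 1 ≤ t := by omega
  have hNsq : N ^ 2 < p ^ t := by
    calc N ^ 2 ≤ (2 ^ N) ^ 2 := Nat.pow_le_pow_left (le_of_lt (Nat.lt_two_pow_self (n := N))) 2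
      _ = 2 ^ (2 * N) := by rw [← pow_mul, mul_comm]
      _ < 2 ^ (2 * N + 2) := Nat.pow_lt_pow_right (by omega) (by omega)
      _ ≤ p ^ (2 * N + 2) := Nat.pow_le_pow_left h2p _
  have hincl' : congSetP p n t ⊆ (HbarSub p n Γ : Set (Matrix.SpecialLinearGroup (Fin n) ℤ_[p])) := by
    intro g hg
    apply elim_outer Γ ht1 ?htmem ?hdiag n g hg ?hz
    case hz =>
      intro i j hij hlt
      exact absurd hlt (by omega)
    case htmem =>
      intro i j hij c hc
      apply tSL_mem_Hbar Γ hij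
      exact dvd_trans (natCast_dvd_pow_p hN1 (by omega)) hc
    case hdiag =>
      intro d hd hoff
      apply diag_mem_Hbar Γ ht1 ?_ n d hd hoff (fun i hi => absurd hi (by omega))
      intro u hu
      exact exists_pow_root hN1 hNsq hu
  have hset : closure ((fun γ => iotaSL p n γ) '' (Γ : Set _))
      = (HbarSub p n Γ : Set (Matrix.SpecialLinearGroup (Fin n) ℤ_[p])) := by
    rw [HbarSub, Subgroup.topologicalClosure_coe, Subgroup.coe_map]
  have hincl : congSetP p n t ⊆ closure ((fun γ => iotaSL p n γ) '' (Γ : Set _)) := by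
    rw [hset]; exact hincl'
  refine ⟨t, ht1, hincl, ?_⟩
  intro k hk V hV W hW
  obtain ⟨g, hg1, hg2⟩ := hW
  exact ⟨g, hincl hg1, hg2⟩
end

section
/- Let p be a prime, n ≥ 1, 0 ≤ k ≤ n, and t ≥ 1. Let V₀ = span_{ℚ_p}(e₁, …, e_k) ⊆ ℚ_p^n and K_{p^t} = {g ∈ SL_n(ℤ_p) : every entry of g − I lies in p^t ℤ_p}. Then the orbit K_{p^t}·V₀ consists exactly of the subspaces of the form span_{ℚ_p}{ e_j + Σ_{i=1}^{n−k} v_{i,j} e_{k+i} : 1 ≤ j ≤ k }, where v ranges over all (n−k)×k matrices all of whose entries lie in p^ت ℤ_p (equivalently, the column spaces of the block matrices [I_k; v] with p^t dividing every entry of v). -/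
open scoped MatrixGroups

/-- The standard subspace `V₀ = ℚ_p e₁ ⊕ ⋯ ⊕ ℚ_p e_k` of `ℚ_p^n`. -/
noncomputable def stdSubspace (p n k : ℕ) [Fact p.Prime] :
    Submodule ℚ_[p] (Fin n → ℚ_[p]) :=
  Submodule.span ℚ_[p] {w | ∃ i : Fin n, i.val < k ∧ w = Pi.single i 1}

/-- The vector `e_j + ∑_{i=1}^{n-k} v_{i,j} e_{k+i}`, i.e. the `j`-th column of the
block matrix `[I_k; v]`. -/
noncomputable def colVec {p : ℕ} [Fact p.Prime] {n k : ℕ}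
    (v : Matrix (Fin (n - k)) (Fin k) ℤ_[p]) (j : Fin k) : Fin n → ℚ_[p] :=
  fun a =>
    if a.val < k then (if a.val = j.val then 1 else 0)
    else if h2 : a.val - k < n - k then ((v ⟨a.val - k, h2⟩ j : ℤ_[p]) : ℚ_[p]) else 0

variable {p : ℕ} [Fact p.Prime] {n k t : ℕ}

lemma coe_sumZ {ι : Type*} (s : Finset ι) (f : ι → ℤ_[p]) :
    ((∑ x ∈ s, f x : ℤ_[p]) : ℚ_[p]) = ∑ x ∈ s, ((f x : ℤ_[p]) : ℚ_[p]) :=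
  map_sum (PadicInt.Coe.ringHom) f s

lemma span_range_eq_of_comb {c d : Fin k → (Fin n → ℚ_[p])}
    (M N : Matrix (Fin k) (Fin k) ℚ_[p])
    (h1 : ∀ j, c j = ∑ l, M l j • d l) (h2 : ∀ j, d j = ∑ l, N l j • c l) :
    Submodule.span ℚ_[p] (Set.range c) = Submodule.span ℚ_[p] (Set.range d) := by
  apply le_antisymm <;> rw [Submodule.span_le] <;> rintro _ ⟨j, rfl⟩
  · rw [h1 j]
    exact Submodule.sum_mem _ fun l _ =>
      Submodule.smul_mem _ _ (Submodule.subset_span ⟨l, rfl⟩)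
  · rw [h2 j]
    exact Submodule.sum_mem _ fun l _ =>
      Submodule.smul_mem _ _ (Submodule.subset_span ⟨l, rfl⟩)

lemma stdSubspace_eq (hk : k ≤ n) :
    stdSubspace p n k = Submodule.span ℚ_[p]
      (Set.range fun j : Fin k => (Pi.single (Fin.castLE hk j) 1 : Fin n → ℚ_[p])) := by
  unfold stdSubspace
  congr 1
  ext w
  constructor
  · rintro ⟨i, hi, rfl⟩
    exact ⟨⟨i.val, hi⟩, by congr 1⟩
  · rintro ⟨j, rfl⟩
    exact ⟨Fin.castLE hk j, j.2, rfl⟩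

lemma matActP_std (g : Matrix.SpecialLinearGroup (Fin n) ℤ_[p]) (hk : k ≤ n) :
    matActP (pMat g) (stdSubspace p n k) =
    Submodule.span ℚ_[p] (Set.range fun j : Fin k =>
      fun a : Fin n => (((g : Matrix (Fin n) (Fin n) ℤ_[p]) a (Fin.castLE hk j) : ℤ_[p]) : ℚ_[p])) := by
  rw [matActP, stdSubspace_eq hk, Submodule.map_span, ← Set.range_comp]
  have : ((pMat g).mulVecLin ∘ fun j : Fin k => (Pi.single (Fin.castLE hk j) 1 : Fin n → ℚ_[p])) =
      fun j : Fin k => fun a : Fin n =>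
        (((g : Matrix (Fin n) (Fin n) ℤ_[p]) a (Fin.castLE hk j) : ℤ_[p]) : ℚ_[p]) := by
    funext j a
    simp [Matrix.mulVecLin_apply, pMat, Matrix.map_apply]
    rfl
  rw [this]

lemma detB_isUnit (ht : 1 ≤ t) (B : Matrix (Fin k) (Fin k) ℤ_[p])
    (hB : ∀ i j, (p : ℤ_[p]) ^ t ∣ B i j - (1 : Matrix (Fin k) (Fin k) ℤ_[p]) i j) :
    IsUnit B.det := by
  classical
  set I : Ideal ℤ_[p] := Ideal.span {(p : ℤ_[p]) ^ t} with hI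
  have hmap : (Ideal.Quotient.mk I).mapMatrix B =
      (Ideal.Quotient.mk I).mapMatrix (1 : Matrix (Fin k) (Fin k) ℤ_[p]) := by
    ext i j
    simp only [RingHom.mapMatrix_apply, Matrix.map_apply]
    rw [Ideal.Quotient.eq, hI, Ideal.mem_span_singleton]
    exact hB i j
  have hdet : (Ideal.Quotient.mk I) B.det = (Ideal.Quotient.mk I) 1 := by
    rw [RingHom.map_det, hmap, ← RingHom.map_det, Matrix.det_one]
  have hdvd : (p : ℤ_[p]) ^ t ∣ 1 - B.det := by
    rw [Ideal.Quotient.eq, hI, Ideal.mem_span_singleton] at hdet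
    exact dvd_sub_comm.mp hdet
  have hnon : (1 - B.det) ∈ nonunits ℤ_[p] := by
    rw [mem_nonunits_iff]
    intro hu
    have hpd : (p : ℤ_[p]) ∣ 1 - B.det :=
      dvd_trans (dvd_pow_self (p : ℤ_[p]) (by omega)) hdvd
    exact PadicInt.p_nonunit (isUnit_of_dvd_unit hpd hu)
  have := IsLocalRing.isUnit_one_sub_self_of_mem_nonunits _ hnon
  simpa using this

lemma backward_dir (hk : k ≤ n) (ht : 1 ≤ t)
    (v : Matrix (Fin (n - k)) (Fin k) ℤ_[p]) (hv : ∀ i j, (p : ℤ_[p]) ^ t ∣ v i j) :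
    ∃ g ∈ {g : Matrix.SpecialLinearGroup (Fin n) ℤ_[p] | ∀ i j, (p : ℤ_[p]) ^ t ∣
      ((g : Matrix (Fin n) (Fin n) ℤ_[p]) i j - (1 : Matrix (Fin n) (Fin n) ℤ_[p]) i j)},
      matActP (pMat g) (stdSubspace p n k) =
        Submodule.span ℚ_[p] (Set.range fun j : Fin k => colVec v j) := by
  classical
  set gZ : Matrix (Fin n) (Fin n) ℤ_[p] := fun a b =>
    (if a = b then 1 else 0) +
      (if h : k ≤ a.val ∧ b.val < k ∧ a.val - k < n - k then
        v ⟨a.val - k, h.2.2⟩ ⟨b.val, h.2.1⟩ else 0) with hgZ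
  have htri : gZ.BlockTriangular OrderDual.toDual := by
    intro i j hij
    have hij' : (i : ℕ) < (j : ℕ) := hij
    simp only [hgZ]
    rw [if_neg (by intro h; rw [h] at hij'; omega), dif_neg (by omega), add_zero]
  have hdiag : ∀ i, gZ i i = 1 := by
    intro i
    simp only [hgZ]
    rw [dif_neg (by omega), add_zero]; simp
  have hdet : gZ.det = 1 := by
    rw [Matrix.det_of_lowerTriangular gZ htri]
    simp [hdiag]
  set g : Matrix.SpecialLinearGroup (Fin n) ℤ_[p] := ⟨gZ, hdet⟩ with hgdef
  refine ⟨g, ?_, ?_⟩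
  · intro i j
    show (p : ℤ_[p]) ^ t ∣ gZ i j - (1 : Matrix (Fin n) (Fin n) ℤ_[p]) i j
    simp only [hgZ, Matrix.one_apply]
    rw [add_sub_cancel_left]
    split
    · exact hv _ _
    · exact dvd_zero _
  · rw [matActP_std g hk]
    have hc : (fun j : Fin k => fun a : Fin n =>
        (((g : Matrix (Fin n) (Fin n) ℤ_[p]) a (Fin.castLE hk j) : ℤ_[p]) : ℚ_[p])) =
        fun j : Fin k => colVec v j := by
      funext j a
      show ((gZ a (Fin.castLE hk j) : ℤ_[p]) : ℚ_[p]) = colVec v j a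
      simp only [hgZ, colVec]
      by_cases ha : a.val < k
      · rw [dif_neg (by omega), add_zero, if_pos ha]
        have : (a = Fin.castLE hk j) ↔ (a.val = j.val) := by
          rw [Fin.ext_iff]; simp
        by_cases haj : a.val = j.val
        · rw [if_pos (this.mpr haj), if_pos haj]; norm_num
        · rw [if_neg (fun h => haj (this.mp h)), if_neg haj]; norm_num
      · have hcond : k ≤ a.val ∧ (Fin.castLE hk j).val < k ∧ a.val - k < n - k := by
          refine ⟨by omega, by simp, by have := a.2; omega⟩
        rw [if_neg (by intro h; rw [h] at ha; exact ha (by simp)),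
          dif_pos hcond, zero_add, if_neg ha, dif_pos hcond.2.2]
        congr 1
    rw [hc]

lemma forward_dir (hk : k ≤ n) (ht : 1 ≤ t)
    (g : Matrix.SpecialLinearGroup (Fin n) ℤ_[p])
    (hg : ∀ i j, (p : ℤ_[p]) ^ t ∣
      ((g : Matrix (Fin n) (Fin n) ℤ_[p]) i j - (1 : Matrix (Fin n) (Fin n) ℤ_[p]) i j)) :
    ∃ v : Matrix (Fin (n - k)) (Fin k) ℤ_[p],
      (∀ i j, (p : ℤ_[p]) ^ t ∣ v i j) ∧
      matActP (pMat g) (stdSubspace p n k) =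
        Submodule.span ℚ_[p] (Set.range fun j : Fin k => colVec v j) := by
  classical
  set G : Matrix (Fin n) (Fin n) ℤ_[p] := (g : Matrix (Fin n) (Fin n) ℤ_[p]) with hGdef
  set B : Matrix (Fin k) (Fin k) ℤ_[p] := G.submatrix (Fin.castLE hk) (Fin.castLE hk) with hBdef
  have hfin : ∀ i : Fin (n - k), k + i.val < n := fun i => by have := i.2; omega
  set C : Matrix (Fin (n - k)) (Fin k) ℤ_[p] :=
    fun i j => G ⟨k + i.val, hfin i⟩ (Fin.castLE hk j) with hCdef
  have hB1 : ∀ i j : Fin k, (p : ℤ_[p]) ^ t ∣ B i j - (1 : Matrix (Fin k) (Fin k) ℤ_[p]) i j := by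
    intro i j
    have h := hg (Fin.castLE hk i) (Fin.castLE hk j)
    rw [Matrix.one_apply] at h ⊢
    simpa [hBdef, Fin.castLE_inj, Matrix.submatrix_apply] using h
  have hCdvd : ∀ i j, (p : ℤ_[p]) ^ t ∣ C i j := by
    intro i j
    have h := hg ⟨k + i.val, hfin i⟩ (Fin.castLE hk j)
    have hne : (⟨k + i.val, hfin i⟩ : Fin n) ≠ Fin.castLE hk j := by
      intro hcontra
      have := congrArg Fin.val hcontra
      simp at this
      omega
    rw [Matrix.one_apply, if_neg hne, sub_zero] at h
    exact h
  have hdetB : IsUnit B.det := detB_isUnit ht B hB1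
  set v : Matrix (Fin (n - k)) (Fin k) ℤ_[p] := C * B⁻¹ with hvdef
  have hvB : v * B = C := by
    rw [hvdef, Matrix.mul_assoc, Matrix.nonsing_inv_mul B hdetB, Matrix.mul_one]
  have hvdvd : ∀ i j, (p : ℤ_[p]) ^ t ∣ v i j := by
    intro i j
    rw [hvdef, Matrix.mul_apply]
    exact Finset.dvd_sum fun l _ => Dvd.dvd.mul_right (hCdvd i l) _
  refine ⟨v, hvdvd, ?_⟩
  rw [matActP_std g hk]
  apply span_range_eq_of_comb (M := B.map ((↑) : ℤ_[p] → ℚ_[p]))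
    (N := (B⁻¹).map ((↑) : ℤ_[p] → ℚ_[p]))
  · -- columns of g as combination of colVec v
    intro j
    funext a
    rw [Finset.sum_apply]
    simp only [Pi.smul_apply, smul_eq_mul, Matrix.map_apply]
    by_cases ha : a.val < k
    · set a' : Fin k := ⟨a.val, ha⟩ with ha'
      have hcol : ∀ l : Fin k, colVec v l a = if l = a' then 1 else 0 := by
        intro l
        rw [colVec, if_pos ha]
        by_cases h : a.val = l.val
        · rw [if_pos h, if_pos (Fin.ext h.symm : l = a')]
        · rw [if_neg h, if_neg (by intro hc; exact h (congrArg Fin.val hc).symm)]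
      have : ∑ l, ((B l j : ℤ_[p]) : ℚ_[p]) * colVec v l a
          = ((B a' j : ℤ_[p]) : ℚ_[p]) := by
        rw [Finset.sum_congr rfl fun l _ => by rw [hcol l]]
        simp [mul_ite]
      erw [this]
      have haeq : (Fin.castLE hk a') = a := by rw [Fin.ext_iff]; rfl
      rw [hBdef]
      simp only [Matrix.submatrix_apply, haeq]
      rfl
    · have hi : a.val - k < n - k := by have := a.2; omega
      set i : Fin (n - k) := ⟨a.val - k, hi⟩ with hi'
      have hcol : ∀ l : Fin k, colVec v l a = ((v i l : ℤ_[p]) : ℚ_[p]) := by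
        intro l
        rw [colVec, if_neg ha, dif_pos hi]
      have haeq : (⟨k + i.val, hfin i⟩ : Fin n) = a := by
        rw [Fin.ext_iff]; simp [hi']; omega
      have hsum : ∑ l, ((B l j : ℤ_[p]) : ℚ_[p]) * colVec v l a
          = ((C i j : ℤ_[p]) : ℚ_[p]) := by
        rw [Finset.sum_congr rfl fun l _ => by rw [hcol l]]
        rw [← hvB, Matrix.mul_apply, coe_sumZ]
        exact Finset.sum_congr rfl fun l _ => by rw [PadicInt.coe_mul, mul_comm]
      erw [hsum, ← haeq]
  · -- colVec v as combination of columns of g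
    intro j
    funext a
    rw [Finset.sum_apply]
    simp only [Pi.smul_apply, smul_eq_mul, Matrix.map_apply]
    by_cases ha : a.val < k
    · set a' : Fin k := ⟨a.val, ha⟩ with ha'
      have haeq : (Fin.castLE hk a') = a := by rw [Fin.ext_iff]; rfl
      have hcl : ∀ l : Fin k, (((G a (Fin.castLE hk l)) : ℤ_[p]) : ℚ_[p])
          = ((B a' l : ℤ_[p]) : ℚ_[p]) := by
        intro l
        rw [hBdef]
        simp only [Matrix.submatrix_apply, haeq]
      have hsum : ∑ l, ((B⁻¹ l j : ℤ_[p]) : ℚ_[p]) * ((G a (Fin.castLE hk l) : ℤ_[p]) : ℚ_[p])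
          = (((B * B⁻¹) a' j : ℤ_[p]) : ℚ_[p]) := by
        rw [Matrix.mul_apply, coe_sumZ]
        exact Finset.sum_congr rfl fun l _ => by rw [hcl l, PadicInt.coe_mul, mul_comm]
      erw [hsum, Matrix.mul_nonsing_inv B hdetB, colVec, if_pos ha, Matrix.one_apply]
      by_cases h : a.val = j.val
      · rw [if_pos h, if_pos (Fin.ext h : a' = j)]; norm_num
      · rw [if_neg h, if_neg (by intro hc; exact h (congrArg Fin.val hc))]; norm_num
    · have hi : a.val - k < n - k := by have := a.2; omega
      set i : Fin (n - k) := ⟨a.val - k, hi⟩ with hi'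
      have haeq : (⟨k + i.val, hfin i⟩ : Fin n) = a := by
        rw [Fin.ext_iff]; simp [hi']; omega
      have hcl : ∀ l : Fin k, (((G a (Fin.castLE hk l)) : ℤ_[p]) : ℚ_[p])
          = ((C i l : ℤ_[p]) : ℚ_[p]) := by
        intro l
        rw [hCdef]
        simp only [haeq]
      have hsum : ∑ l, ((B⁻¹ l j : ℤ_[p]) : ℚ_[p]) * ((G a (Fin.castLE hk l) : ℤ_[p]) : ℚ_[p])
          = ((v i j : ℤ_[p]) : ℚ_[p]) := by
        rw [hvdef, Matrix.mul_apply, coe_sumZ]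
        exact Finset.sum_congr rfl fun l _ => by rw [hcl l, PadicInt.coe_mul, mul_comm]
      erw [hsum, colVec, if_neg ha, dif_pos hi]

/-- **Description of the principal congruence components (equation (2)).**
The `K_{p^t}`-orbit of `V₀ = ℚ_p e₁ ⊕ ⋯ ⊕ ℚ_p e_k` consists exactly of the column
spaces of the block matrices `[I_k; v]` where all entries of `v` lie in
`p^t ℤ_p`. -/
theorem congruence_orbit_eq (p n k t : ℕ) [Fact p.Prime] (hn : 1 ≤ n) (hk : k ≤ n)
    (ht : 1 ≤ t) :
    {M | ∃ g ∈ congSetP p n t, matActP (pMat g) (stdSubspace p n k) = M} =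
    {M | ∃ v : Matrix (Fin (n - k)) (Fin k) ℤ_[p],
      (∀ i j, (p : ℤ_[p]) ^ t ∣ v i j) ∧
      M = Submodule.span ℚ_[p] (Set.range fun j : Fin k => colVec v j)} := by
  ext M
  simp only [Set.mem_setOf_eq]
  constructor
  · rintro ⟨g, hg, rfl⟩
    obtain ⟨v, hv, hspan⟩ := forward_dir hk ht g hg
    exact ⟨v, hv, hspan⟩
  · rintro ⟨v, hv, rfl⟩
    obtain ⟨g, hg, hspan⟩ := backward_dir hk ht v hv
    exact ⟨g, hg, hspan⟩
end

section
/- Let p be a prime, n ≥ 1, and 0 ≤ k ≤ n. Let V₀ = span_{ℚ_p}(e₁, …, e_k), and let M₀ be the ℤ_p-submodule of ℚ_p^n generated by V₀ together with e_{k+1}, …, e_n (i.e., M₀ = V₀ ⊕ (ℤ_p e_{k+1} ⊕ ⋯ ⊕ ℤ_p e_n)). Then for every g ∈ SL_n(ℤ_p): g·M₀ = M₀ if and only if g·V₀ = V₀. -/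
open scoped MatrixGroups

/-- The image of a `ℤ_p`-submodule of `ℚ_p^n` under the matrix `A`. -/
noncomputable def zAct {p : ℕ} [Fact p.Prime] {n : ℕ} (A : Matrix (Fin n) (Fin n) ℚ_[p])
    (M : Submodule ℤ_[p] (Fin n → ℚ_[p])) : Submodule ℤ_[p] (Fin n → ℚ_[p]) :=
  M.map (A.mulVecLin.restrictScalars ℤ_[p])

/-- The standard module `M₀ = V₀ ⊕ (ℤ_p e_{k+1} ⊕ ⋯ ⊕ ℤ_p e_n)`. -/
noncomputable def stdModule (p n k : ℕ) [Fact p.Prime] :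
    Submodule ℤ_[p] (Fin n → ℚ_[p]) :=
  (stdSubspace p n k).restrictScalars ℤ_[p] ⊔
    Submodule.span ℤ_[p] {w | ∃ i : Fin n, k ≤ i.val ∧ w = Pi.single i 1}

namespace StdStabAux

variable {p n k : ℕ} [Fact p.Prime]

/-- Elements of `stdSubspace` vanish on the tail coordinates. -/
lemma coord_eq_zero_of_mem {x : Fin n → ℚ_[p]} (hx : x ∈ stdSubspace p n k)
    (i : Fin n) (hi : k ≤ i.val) : x i = 0 := by
  have : stdSubspace p n k ≤
      { carrier := {x : Fin n → ℚ_[p] | ∀ j : Fin n, k ≤ j.val → x j = 0}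
        add_mem' := by
          intro a b ha hb j hj
          simp [Pi.add_apply, ha j hj, hb j hj]
        zero_mem' := by intro j hj; rfl
        smul_mem' := by
          intro c a ha j hj
          simp [Pi.smul_apply, ha j hj] } := by
    rw [stdSubspace, Submodule.span_le]
    rintro w ⟨j, hj, rfl⟩ j' hj'
    have : j ≠ j' := by
      intro h; subst h; omega
    simp [Pi.single_apply, Ne.symm this]
  exact this hx i hi

/-- Conversely, vectors vanishing on tail coordinates lie in `stdSubspace`. -/
lemma mem_of_coord_eq_zero {x : Fin n → ℚ_[p]} (hx : ∀ i : Fin n, k ≤ i.val → x i = 0) :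
    x ∈ stdSubspace p n k := by
  have hxsum : x = ∑ i : Fin n, Pi.single i (x i) := (Finset.univ_sum_single x).symm
  rw [hxsum]
  refine Submodule.sum_mem _ ?_
  intro i _
  by_cases hi : i.val < k
  · have : Pi.single i (x i) = x i • (Pi.single i (1 : ℚ_[p]) : Fin n → ℚ_[p]) := by
      rw [← Pi.single_smul, smul_eq_mul, mul_one]
    rw [this]
    exact Submodule.smul_mem _ _ (Submodule.subset_span ⟨i, hi, rfl⟩)
  · have : x i = 0 := hx i (le_of_not_gt hi)
    rw [this, Pi.single_zero]
    exact Submodule.zero_mem _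

lemma single_mem_stdModule (i : Fin n) : Pi.single i (1 : ℚ_[p]) ∈ stdModule p n k := by
  by_cases hi : i.val < k
  · exact Submodule.mem_sup_left (Submodule.subset_span ⟨i, hi, rfl⟩)
  · exact Submodule.mem_sup_right (Submodule.subset_span ⟨i, le_of_not_gt hi, rfl⟩)

lemma stdSubspace_le_stdModule {x : Fin n → ℚ_[p]} (hx : x ∈ stdSubspace p n k) :
    x ∈ stdModule p n k :=
  Submodule.mem_sup_left hx

/-- A vector with all coordinates in `ℤ_p` (images of integers) lies in `stdModule`. -/
lemma intCoords_mem_stdModule (a : Fin n → ℤ_[p]) :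
    (fun j => (a j : ℚ_[p])) ∈ stdModule p n k := by
  have : (fun j => (a j : ℚ_[p])) = ∑ i : Fin n, a i • (Pi.single i (1 : ℚ_[p]) : Fin n → ℚ_[p]) := by
    rw [← Finset.univ_sum_single (fun j => (a j : ℚ_[p]))]
    refine Finset.sum_congr rfl ?_
    intro i _
    rw [← Pi.single_smul]
    congr 1
    simp [Algebra.smul_def]
  rw [this]
  exact Submodule.sum_mem _ fun i _ => Submodule.smul_mem _ _ (single_mem_stdModule i)

/-- The tail coordinates of an element of `stdModule` have norm at most 1. -/
lemma norm_coord_le_one_of_mem {x : Fin n → ℚ_[p]} (hx : x ∈ stdModule p n k)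
    (i : Fin n) (hi : k ≤ i.val) : ‖x i‖ ≤ 1 := by
  have : stdModule p n k ≤
      { carrier := {x : Fin n → ℚ_[p] | ∀ j : Fin n, k ≤ j.val → ‖x j‖ ≤ 1}
        add_mem' := by
          intro a b ha hb j hj
          refine le_trans (Padic.nonarchimedean _ _) ?_
          exact max_le (ha j hj) (hb j hj)
        zero_mem' := by intro j hj; simp
        smul_mem' := by
          intro c a ha j hj
          have : (c • a) j = (c : ℚ_[p]) * a j := rfl
          rw [this, norm_mul]
          have hc : ‖(c : ℚ_[p])‖ ≤ 1 := by
            rw [← PadicInt.norm_def]; exact PadicInt.norm_le_one c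
          exact mul_le_one₀ hc (norm_nonneg _) (ha j hj) } := by
    rw [stdModule]
    refine sup_le ?_ ?_
    · intro x hx j hj
      rw [coord_eq_zero_of_mem (Submodule.restrictScalars_mem _ _ _ |>.mp hx) j hj]
      simp
    · rw [Submodule.span_le]
      rintro w ⟨j, hj, rfl⟩ j' hj'
      rcases eq_or_ne j j' with h | h
      · subst h; simp
      · simp [Pi.single_apply, Ne.symm h]
  exact this hx i hi

lemma pMat_mul (g h : Matrix.SpecialLinearGroup (Fin n) ℤ_[p]) :
    pMat (p := p) (g * h) = pMat g * pMat h := by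
  show ((g * h : Matrix.SpecialLinearGroup (Fin n) ℤ_[p]) :
      Matrix (Fin n) (Fin n) ℤ_[p]).map (PadicInt.Coe.ringHom : ℤ_[p] →+* ℚ_[p]) = _
  rw [Matrix.SpecialLinearGroup.coe_mul, Matrix.map_mul]
  rfl

lemma pMat_one : pMat (p := p) (1 : Matrix.SpecialLinearGroup (Fin n) ℤ_[p]) = 1 := by
  ext i j
  simp [pMat, Matrix.map_apply, Matrix.one_apply, apply_ite ((↑) : ℤ_[p] → ℚ_[p])]
  show (((1 : Matrix (Fin n) (Fin n) ℤ_[p]) i j : ℤ_[p]) : ℚ_[p]) = _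
  rw [Matrix.one_apply]
  split_ifs <;> simp

lemma zAct_zAct (A B : Matrix (Fin n) (Fin n) ℚ_[p]) (M : Submodule ℤ_[p] (Fin n → ℚ_[p])) :
    zAct A (zAct B M) = zAct (A * B) M := by
  rw [zAct, zAct, zAct, Matrix.mulVecLin_mul]
  exact (Submodule.map_comp (B.mulVecLin.restrictScalars ℤ_[p])
    (A.mulVecLin.restrictScalars ℤ_[p]) M).symm

lemma zAct_one (M : Submodule ℤ_[p] (Fin n → ℚ_[p])) : zAct (1 : Matrix (Fin n) (Fin n) ℚ_[p]) M = M := by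
  rw [zAct, Matrix.mulVecLin_one]
  exact Submodule.map_id M

lemma matActP_matActP (A B : Matrix (Fin n) (Fin n) ℚ_[p]) (V : Submodule ℚ_[p] (Fin n → ℚ_[p])) :
    matActP A (matActP B V) = matActP (A * B) V := by
  rw [matActP, matActP, matActP, Matrix.mulVecLin_mul]
  exact (Submodule.map_comp B.mulVecLin A.mulVecLin V).symm

lemma matActP_one (V : Submodule ℚ_[p] (Fin n → ℚ_[p])) :
    matActP (1 : Matrix (Fin n) (Fin n) ℚ_[p]) V = V := by
  rw [matActP, Matrix.mulVecLin_one]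
  exact Submodule.map_id V

lemma pMat_mul_inv (g : Matrix.SpecialLinearGroup (Fin n) ℤ_[p]) :
    pMat g * pMat g⁻¹ = 1 := by
  rw [← pMat_mul, mul_inv_cancel, pMat_one]

lemma pMat_inv_mul (g : Matrix.SpecialLinearGroup (Fin n) ℤ_[p]) :
    pMat g⁻¹ * pMat g = 1 := by
  rw [← pMat_mul, inv_mul_cancel, pMat_one]

/-- The column of `pMat g` lies in `stdModule`. -/
lemma pMat_mulVec_single_mem (g : Matrix.SpecialLinearGroup (Fin n) ℤ_[p]) (i : Fin n) :
    (pMat g).mulVec (Pi.single i (1 : ℚ_[p])) ∈ stdModule p n k := by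
  rw [show (pMat g).mulVec (Pi.single i (1 : ℚ_[p])) = fun j => pMat g j i * 1 from
    funext fun j => by simp [Matrix.mulVec_single]]
  have : (fun j => pMat g j i * 1) = fun j => ((g : Matrix (Fin n) (Fin n) ℤ_[p]) j i : ℚ_[p]) := by
    funext j; simp [pMat, Matrix.map_apply]; rfl
  rw [this]
  exact intCoords_mem_stdModule _

/-- `restrictScalars` commutes with `map` by `mulVecLin`. -/
lemma restrictScalars_matActP (A : Matrix (Fin n) (Fin n) ℚ_[p])
    (V : Submodule ℚ_[p] (Fin n → ℚ_[p])) :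
    (matActP A V).restrictScalars ℤ_[p] =
      (V.restrictScalars ℤ_[p]).map (A.mulVecLin.restrictScalars ℤ_[p]) := by
  ext x
  simp [matActP, Submodule.mem_map]

/-- If `g` stabilizes `V₀`, then `g · M₀ ≤ M₀`. -/
lemma zAct_le_of_stab (g : Matrix.SpecialLinearGroup (Fin n) ℤ_[p])
    (hV : matActP (pMat g) (stdSubspace p n k) = stdSubspace p n k) :
    zAct (pMat g) (stdModule p n k) ≤ stdModule p n k := by
  rw [zAct, stdModule, Submodule.map_sup]
  refine sup_le ?_ ?_
  · rw [← restrictScalars_matActP, hV]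
    exact le_sup_left
  · rw [Submodule.map_span]
    rw [Submodule.span_le]
    rintro w ⟨v, ⟨i, hi, rfl⟩, rfl⟩
    exact pMat_mulVec_single_mem g i

/-- If `g` stabilizes `M₀`, then `g · V₀ ≤ V₀`. -/
lemma matActP_le_of_stab (g : Matrix.SpecialLinearGroup (Fin n) ℤ_[p])
    (hM : zAct (pMat g) (stdModule p n k) = stdModule p n k) :
    matActP (pMat g) (stdSubspace p n k) ≤ stdSubspace p n k := by
  rintro _ ⟨x, hx, rfl⟩
  set y := (pMat g).mulVecLin x with hy
  refine mem_of_coord_eq_zero ?_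
  intro i hi
  by_contra h0
  -- every scalar multiple of y lies in M₀
  have hmem : ∀ c : ℚ_[p], c • y ∈ stdModule p n k := by
    intro c
    have : c • y = ((pMat g).mulVecLin.restrictScalars ℤ_[p]) (c • x) := by
      simp [hy, Matrix.mulVecLin, Matrix.mulVec_smul]
    rw [this, ← hM]
    exact Submodule.mem_map_of_mem
      (stdSubspace_le_stdModule (Submodule.smul_mem _ c hx))
  have hnorm : ∀ c : ℚ_[p], ‖c * y i‖ ≤ 1 := by
    intro c
    have := norm_coord_le_one_of_mem (hmem c) i hi
    simpa using this
  have hbad := hnorm ((y i)⁻¹ * (p : ℚ_[p])⁻¹)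
  rw [mul_comm (y i)⁻¹ _, mul_assoc, inv_mul_cancel₀ h0, mul_one, norm_inv,
    Padic.norm_p, inv_inv] at hbad
  have hp2 : (2 : ℝ) ≤ (p : ℝ) := by
    exact_mod_cast (Fact.out : p.Prime).two_le
  linarith

end StdStabAux

/-- **Proposition 4.4.**  For `g ∈ SL_n(ℤ_p)`, `g` stabilizes
`M₀ = V₀ ⊕ (ℤ_p e_{k+1} ⊕ ⋯ ⊕ ℤ_p e_n)` if and only if it stabilizes `V₀`. -/
theorem stdModule_stab_iff (p n k : ℕ) [Fact p.Prime] (hn : 1 ≤ n) (hk : k ≤ n)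
    (g : Matrix.SpecialLinearGroup (Fin n) ℤ_[p]) :
    zAct (pMat g) (stdModule p n k) = stdModule p n k ↔
      matActP (pMat g) (stdSubspace p n k) = stdSubspace p n k := by
  open StdStabAux in
  constructor
  · intro hM
    have hM' : zAct (pMat g⁻¹) (stdModule p n k) = stdModule p n k := by
      conv_lhs => rw [← hM]
      rw [zAct_zAct, pMat_inv_mul, zAct_one]
    refine le_antisymm (matActP_le_of_stab g hM) ?_
    have h1 := matActP_le_of_stab g⁻¹ hM'
    calc stdSubspace p n k
        = matActP (pMat g) (matActP (pMat g⁻¹) (stdSubspace p n k)) := by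
          rw [matActP_matActP, pMat_mul_inv, matActP_one]
      _ ≤ matActP (pMat g) (stdSubspace p n k) := Submodule.map_mono h1
  · intro hV
    have hV' : matActP (pMat g⁻¹) (stdSubspace p n k) = stdSubspace p n k := by
      conv_lhs => rw [← hV]
      rw [matActP_matActP, pMat_inv_mul, matActP_one]
    refine le_antisymm (zAct_le_of_stab g hV) ?_
    have h1 := zAct_le_of_stab g⁻¹ hV'
    calc stdModule p n k
        = zAct (pMat g) (zAct (pMat g⁻¹) (stdModule p n k)) := by
          rw [zAct_zAct, pMat_mul_inv, zAct_one]
      _ ≤ zAct (pMat g) (stdModule p n k) := Submodule.map_mono h1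
end

section
/- Let p be a prime, n ≥ 1, and 0 ≤ k ≤ n. Let M be a ℤ_p-submodule of ℚ_p^n that is the internal direct sum M = V ⊕ L of a k-dimensional ℚ_p-subspace V of ℚ_p^n and a free ℤ_p-submodule L of ℚ_p^n of rank n−k. Then there exist g ∈ GL_n(ℚ) and s ∈ SL_n(ℤ_p) such that g·M = s·M₀, where M₀ = span_{ℚ_p}(e₁,…,e_k) ⊕ (ℤ_p e_{k+1} ⊕ ⋯ ⊕ ℤ_p e_n). -/
open scoped MatrixGroups

/-- A rational invertible matrix, viewed as a `p`-adic matrix. -/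
noncomputable def qMat {p : ℕ} [Fact p.Prime] {n : ℕ} (g : GL (Fin n) ℚ) :
    Matrix (Fin n) (Fin n) ℚ_[p] :=
  (g : Matrix (Fin n) (Fin n) ℚ).map (Rat.cast : ℚ → ℚ_[p])

section CompleteSectionAux

variable {p : ℕ} [Fact p.Prime] {n : ℕ}

open Matrix Submodule

lemma zAct_mul (A B : Matrix (Fin n) (Fin n) ℚ_[p]) (M : Submodule ℤ_[p] (Fin n → ℚ_[p])) :
    zAct (A * B) M = zAct A (zAct B M) := by
  unfold zAct
  rw [Matrix.mulVecLin_mul]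
  rw [show (A.mulVecLin ∘ₗ B.mulVecLin).restrictScalars ℤ_[p]
      = (A.mulVecLin.restrictScalars ℤ_[p]) ∘ₗ (B.mulVecLin.restrictScalars ℤ_[p]) from rfl]
  rw [Submodule.map_comp]

lemma image_set (f : (Fin n → ℚ_[p]) → (Fin n → ℚ_[p])) (P : Fin n → Prop)
    (c : Fin n → (Fin n → ℚ_[p])) :
    f '' {w | ∃ i, P i ∧ w = c i} = {w | ∃ i, P i ∧ w = f (c i)} := by
  ext w
  constructor
  · rintro ⟨x, ⟨i, hi, rfl⟩, rfl⟩; exact ⟨i, hi, rfl⟩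
  · rintro ⟨i, hi, rfl⟩; exact ⟨c i, ⟨i, hi, rfl⟩, rfl⟩

lemma matActP_eq (A : Matrix (Fin n) (Fin n) ℚ_[p]) {k : ℕ} :
    matActP A (stdSubspace p n k)
      = Submodule.span ℚ_[p] {w | ∃ i : Fin n, i.val < k ∧ w = A.mulVec (Pi.single i 1)} := by
  unfold matActP stdSubspace
  rw [Submodule.map_span]
  congr 1
  rw [show ⇑A.mulVecLin = A.mulVec from rfl]
  exact image_set A.mulVec (fun i => i.val < k) (fun i => Pi.single i 1)

lemma zAct_eq (A : Matrix (Fin n) (Fin n) ℚ_[p]) {k : ℕ} :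
    zAct A (stdModule p n k)
      = (matActP A (stdSubspace p n k)).restrictScalars ℤ_[p]
        ⊔ Submodule.span ℤ_[p] {w | ∃ i : Fin n, k ≤ i.val ∧ w = A.mulVec (Pi.single i 1)} := by
  have h1 : ((stdSubspace p n k).restrictScalars ℤ_[p]).map (A.mulVecLin.restrictScalars ℤ_[p])
      = (matActP A (stdSubspace p n k)).restrictScalars ℤ_[p] := by
    ext x
    simp only [Submodule.mem_map, Submodule.restrictScalars_mem, matActP,
      LinearMap.coe_restrictScalars]
  have h2 : (Submodule.span ℤ_[p] {w | ∃ i : Fin n, k ≤ i.val ∧ w = Pi.single i 1}).map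
        (A.mulVecLin.restrictScalars ℤ_[p])
      = Submodule.span ℤ_[p] {w | ∃ i : Fin n, k ≤ i.val ∧ w = A.mulVec (Pi.single i 1)} := by
    rw [Submodule.map_span]
    congr 1
    rw [show ⇑(A.mulVecLin.restrictScalars ℤ_[p]) = A.mulVec from rfl]
    exact image_set A.mulVec (fun i => k ≤ i.val) (fun i => Pi.single i 1)
  unfold zAct stdModule
  rw [Submodule.map_sup, h1, h2]

lemma smul_single_padic (z : ℤ_[p]) (i : Fin n) (x : ℚ_[p]) :
    z • (Pi.single i x : Fin n → ℚ_[p]) = Pi.single i ((z : ℚ_[p]) * x) := by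
  have h : z • x = (z : ℚ_[p]) * x := by
    rw [← PadicInt.algebraMap_apply, ← Algebra.smul_def]
  rw [← h, ← Pi.single_smul]

lemma zAct_diag {k : ℕ} (d : Fin n → ℤ_[p]) (hd : ∀ i, IsUnit (d i)) :
    zAct (Matrix.diagonal fun i => (d i : ℚ_[p])) (stdModule p n k) = stdModule p n k := by
  have hmv : ∀ i : Fin n, (Matrix.diagonal fun i => (d i : ℚ_[p])).mulVec (Pi.single i 1)
      = Pi.single i (d i : ℚ_[p]) := by
    intro i
    rw [Matrix.diagonal_mulVec_single, mul_one]
  have hne : ∀ i : Fin n, (d i : ℚ_[p]) ≠ 0 := fun i =>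
    PadicInt.coe_ne_zero.2 (hd i).ne_zero
  have h1 : matActP (Matrix.diagonal fun i => (d i : ℚ_[p])) (stdSubspace p n k)
      = stdSubspace p n k := by
    rw [matActP_eq]
    apply le_antisymm
    · rw [Submodule.span_le]
      rintro w ⟨i, hik, rfl⟩
      rw [hmv i, show (Pi.single i ((d i : ℚ_[p])) : Fin n → ℚ_[p])
          = (d i : ℚ_[p]) • (Pi.single i 1 : Fin n → ℚ_[p]) by
        rw [← Pi.single_smul, smul_eq_mul, mul_one]]
      exact Submodule.smul_mem _ _ (Submodule.subset_span ⟨i, hik, rfl⟩)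
    · rw [stdSubspace, Submodule.span_le]
      rintro w ⟨i, hik, rfl⟩
      have : (Pi.single i (1 : ℚ_[p]) : Fin n → ℚ_[p])
          = ((d i : ℚ_[p]))⁻¹ • (Pi.single i ((d i : ℚ_[p])) : Fin n → ℚ_[p]) := by
        rw [← Pi.single_smul, smul_eq_mul, inv_mul_cancel₀ (hne i)]
      rw [this]
      exact Submodule.smul_mem _ _ (Submodule.subset_span ⟨i, hik, (hmv i).symm⟩)
  have h2 : Submodule.span ℤ_[p] {w | ∃ i : Fin n, k ≤ i.val ∧
        w = (Matrix.diagonal fun i => (d i : ℚ_[p])).mulVec (Pi.single i 1)}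
      = Submodule.span ℤ_[p] {w | ∃ i : Fin n, k ≤ i.val ∧ w = Pi.single i (1:ℚ_[p])} := by
    apply le_antisymm
    · rw [Submodule.span_le]
      rintro w ⟨i, hik, rfl⟩
      rw [hmv i, show (Pi.single i ((d i : ℚ_[p])) : Fin n → ℚ_[p])
          = (d i) • (Pi.single i (1:ℚ_[p]) : Fin n → ℚ_[p]) by
        rw [smul_single_padic, mul_one]]
      exact Submodule.smul_mem _ _ (Submodule.subset_span ⟨i, hik, rfl⟩)
    · rw [Submodule.span_le]
      rintro w ⟨i, hik, rfl⟩
      have : (Pi.single i (1 : ℚ_[p]) : Fin n → ℚ_[p])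
          = ((hd i).unit⁻¹ : ℤ_[p]ˣ) • (Pi.single i ((d i : ℚ_[p])) : Fin n → ℚ_[p]) := by
        rw [Units.smul_def, smul_single_padic]
        have hu : (((hd i).unit⁻¹ : ℤ_[p]ˣ) : ℤ_[p]) * d i = 1 := by
          have h0 := (hd i).unit.inv_mul
          rwa [IsUnit.unit_spec] at h0
        have hmul : ((((hd i).unit⁻¹ : ℤ_[p]ˣ) : ℤ_[p]) : ℚ_[p]) * (d i : ℚ_[p]) = 1 := by
          calc ((((hd i).unit⁻¹ : ℤ_[p]ˣ) : ℤ_[p]) : ℚ_[p]) * (d i : ℚ_[p])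
              = (((((hd i).unit⁻¹ : ℤ_[p]ˣ) : ℤ_[p]) * d i : ℤ_[p]) : ℚ_[p]) :=
                (PadicInt.coe_mul _ _).symm
            _ = 1 := by rw [hu, PadicInt.coe_one]
        rw [hmul]
      rw [this, Units.smul_def]
      exact Submodule.smul_mem _ _ (Submodule.subset_span ⟨i, hik, (hmv i).symm⟩)
  rw [zAct_eq, h1, h2, stdModule]

end CompleteSectionAux

/-- **Proposition 4.6.**  Every `ℤ_p`-module `M = V ⊕ L`, with `V` a `k`-dimensional
subspace of `ℚ_p^n` and `L` a free `ℤ_p`-module of rank `n-k`, can be carried by an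
element of `GL_n(ℚ)` onto a module in the `SL_n(ℤ_p)`-orbit of `M₀`. -/
theorem complete_section (p n k : ℕ) [Fact p.Prime] (hn : 1 ≤ n) (hk : k ≤ n)
    (M : Submodule ℤ_[p] (Fin n → ℚ_[p]))
    (V : Submodule ℚ_[p] (Fin n → ℚ_[p])) (hV : Module.finrank ℚ_[p] V = k)
    (L : Submodule ℤ_[p] (Fin n → ℚ_[p])) (bL : Module.Basis (Fin (n - k)) ℤ_[p] ↥L)
    (hsum : V.restrictScalars ℤ_[p] ⊔ L = M)
    (hdisj : V.restrictScalars ℤ_[p] ⊓ L = ⊥) :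
    ∃ (g : GL (Fin n) ℚ) (s : Matrix.SpecialLinearGroup (Fin n) ℤ_[p]),
      zAct (qMat g) M = zAct (pMat s) (stdModule p n k) := by
  classical
  have hp : p.Prime := Fact.out
  have hp1 : (1 : ℝ) < p := by exact_mod_cast hp.one_lt
  haveI : Nonempty (Fin n) := ⟨⟨0, hn⟩⟩
  -- bases of V and L
  let bV : Module.Basis (Fin k) ℚ_[p] ↥V := Module.finBasisOfFinrankEq ℚ_[p] ↥V hV
  let vK : Fin k → (Fin n → ℚ_[p]) := fun j => (bV j : Fin n → ℚ_[p])
  let wL : Fin (n - k) → (Fin n → ℚ_[p]) := fun j => (bL j : Fin n → ℚ_[p])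
  have hvKind : LinearIndependent ℚ_[p] vK :=
    bV.linearIndependent.map' V.subtype (Submodule.ker_subtype V)
  have hwLindZ : LinearIndependent ℤ_[p] wL :=
    bL.linearIndependent.map' L.subtype (Submodule.ker_subtype L)
  have hwLind : LinearIndependent ℚ_[p] wL :=
    hwLindZ.localization ℚ_[p] (nonZeroDivisors ℤ_[p])
  have spanV : Submodule.span ℚ_[p] (Set.range vK) = V := by
    have h1 : Set.range vK = V.subtype '' Set.range bV := by rw [← Set.range_comp]; rfl
    rw [h1, ← Submodule.map_span, bV.span_eq, Submodule.map_top, Submodule.range_subtype]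
  have spanL : Submodule.span ℤ_[p] (Set.range wL) = L := by
    have h1 : Set.range wL = L.subtype '' Set.range bL := by rw [← Set.range_comp]; rfl
    rw [h1, ← Submodule.map_span, bL.span_eq, Submodule.map_top, Submodule.range_subtype]
  -- disjointness over ℚ_p
  have hWV : Disjoint (Submodule.span ℚ_[p] (Set.range vK))
      (Submodule.span ℚ_[p] (Set.range wL)) := by
    rw [spanV, disjoint_iff, eq_bot_iff]
    rintro x hx
    rw [Submodule.mem_inf] at hx
    obtain ⟨hxV, hxW⟩ := hx
    obtain ⟨c, hc⟩ := (Submodule.mem_span_range_iff_exists_fun ℚ_[p]).1 hxW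
    obtain ⟨m, hm⟩ := pow_unbounded_of_one_lt (∑ j, ‖c j‖) hp1
    have hb : ∀ j, ‖(p : ℚ_[p]) ^ m * c j‖ ≤ 1 := by
      intro j
      rw [norm_mul, norm_pow, Padic.norm_p]
      have h1 : ‖c j‖ ≤ (p : ℝ) ^ m :=
        le_of_lt (lt_of_le_of_lt
          (Finset.single_le_sum (fun i _ => norm_nonneg (c i)) (Finset.mem_univ j)) hm)
      have hppos : (0:ℝ) < p := by positivity
      calc ((p:ℝ)⁻¹) ^ m * ‖c j‖ ≤ ((p:ℝ)⁻¹) ^ m * (p:ℝ) ^ m := by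
            apply mul_le_mul_of_nonneg_left h1 (by positivity)
        _ = 1 := by rw [← mul_pow, inv_mul_cancel₀ (ne_of_gt hppos), one_pow]
    let z : Fin (n - k) → ℤ_[p] := fun j => ⟨(p : ℚ_[p]) ^ m * c j, hb j⟩
    have hzx : (p : ℚ_[p]) ^ m • x = ∑ j, z j • wL j := by
      rw [← hc, Finset.smul_sum]
      refine Finset.sum_congr rfl fun j _ => ?_
      rw [smul_smul]
      rw [← algebraMap_smul (R := ℤ_[p]) ℚ_[p] (z j) (wL j), PadicInt.algebraMap_apply]
    have hxL : (p : ℚ_[p]) ^ m • x ∈ L := by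
      rw [hzx]
      exact Submodule.sum_smul_mem L _ fun j _ => SetLike.coe_mem (bL j)
    have hxVr : (p : ℚ_[p]) ^ m • x ∈ V.restrictScalars ℤ_[p] := V.smul_mem _ hxV
    have h0 : (p : ℚ_[p]) ^ m • x = 0 := by
      have hmem : (p : ℚ_[p]) ^ m • x ∈ V.restrictScalars ℤ_[p] ⊓ L :=
        Submodule.mem_inf.2 ⟨hxVr, hxL⟩
      rw [hdisj] at hmem
      simpa using hmem
    have hpne : ((p : ℚ_[p]) ^ m) ≠ 0 := pow_ne_zero _ (Nat.cast_ne_zero.2 hp.ne_zero)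
    have hx0 := (smul_eq_zero.1 h0).resolve_left hpne
    simp [hx0]
  -- the combined family
  have hsumInd : LinearIndependent ℚ_[p] (Sum.elim vK wL) := hvKind.sum_type hwLind hWV
  let fsum : Fin n → Fin k ⊕ Fin (n - k) := fun i =>
    if h : (i : ℕ) < k then Sum.inl ⟨i, h⟩ else Sum.inr ⟨(i : ℕ) - k, by omega⟩
  have hgf : ∀ i : Fin n,
      (Sum.elim (fun x : Fin k => (x : ℕ)) (fun j : Fin (n - k) => k + j) (fsum i)) = i := by
    intro i
    by_cases h : (i : ℕ) < k
    · simp only [fsum, dif_pos h, Sum.elim_inl]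
    · simp only [fsum, dif_neg h, Sum.elim_inr]; omega
  have hfinj : Function.Injective fsum := fun a b hab =>
    Fin.ext (by rw [← hgf a, ← hgf b, hab])
  let vfun : Fin n → (Fin n → ℚ_[p]) := fun i => Sum.elim vK wL (fsum i)
  have hvfInd : LinearIndependent ℚ_[p] vfun := hsumInd.comp fsum hfinj
  have hcard : Fintype.card (Fin n) = Module.finrank ℚ_[p] (Fin n → ℚ_[p]) := by
    rw [Module.finrank_pi]
  let bFull : Module.Basis (Fin n) ℚ_[p] (Fin n → ℚ_[p]) :=
    basisOfLinearIndependentOfCardEqFinrank hvfInd hcard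
  have hbFullc : ⇑bFull = vfun := coe_basisOfLinearIndependentOfCardEqFinrank _ _
  -- the matrix A with columns vfun
  let A : Matrix (Fin n) (Fin n) ℚ_[p] := Matrix.of fun i j => vfun j i
  have hcol : ∀ j : Fin n, A.mulVec (Pi.single j 1) = vfun j := by
    intro j; ext i
    rw [Matrix.mulVec_single]
    simp [A]
  haveI hAinv : Invertible A := by
    have : A = (Pi.basisFun ℚ_[p] (Fin n)).toMatrix bFull := by
      ext i j
      rw [Module.Basis.toMatrix_apply, Pi.basisFun_repr, hbFullc]; rfl
    rw [this]
    exact (Pi.basisFun ℚ_[p] (Fin n)).invertibleToMatrix bFull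
  -- zAct A (stdModule) = M
  have hsetV : {w | ∃ i : Fin n, (i : ℕ) < k ∧ w = A.mulVec (Pi.single i 1)}
      = Set.range vK := by
    ext w
    constructor
    · rintro ⟨i, hik, rfl⟩
      rw [hcol i]
      refine ⟨⟨(i : ℕ), hik⟩, ?_⟩
      simp only [vfun, fsum, dif_pos hik, Sum.elim_inl]
    · rintro ⟨j, rfl⟩
      refine ⟨⟨(j : ℕ), lt_of_lt_of_le j.2 hk⟩, j.2, ?_⟩
      rw [hcol]
      simp only [vfun, fsum]
      rw [dif_pos (show ((⟨(j : ℕ), lt_of_lt_of_le j.2 hk⟩ : Fin n) : ℕ) < k from j.2)]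
      rw [Sum.elim_inl]
  have hsetL : {w | ∃ i : Fin n, k ≤ (i : ℕ) ∧ w = A.mulVec (Pi.single i 1)}
      = Set.range wL := by
    ext w
    constructor
    · rintro ⟨i, hik, rfl⟩
      rw [hcol i]
      refine ⟨⟨(i : ℕ) - k, by omega⟩, ?_⟩
      simp only [vfun, fsum, dif_neg (not_lt.2 hik), Sum.elim_inr]
    · rintro ⟨j, rfl⟩
      have hj : (j : ℕ) < n - k := j.2
      refine ⟨⟨k + (j : ℕ), by omega⟩, Nat.le_add_right k _, ?_⟩
      rw [hcol]
      simp only [vfun, fsum]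
      rw [dif_neg (show ¬ ((⟨k + (j : ℕ), by omega⟩ : Fin n) : ℕ) < k by simp)]
      rw [Sum.elim_inr]
      exact congrArg wL (Fin.ext (show (j : ℕ) = k + (j : ℕ) - k by omega))
  have hMA : zAct A (stdModule p n k) = M := by
    rw [zAct_eq A]
    have h1 : matActP A (stdSubspace p n k) = V := by rw [matActP_eq, hsetV, spanV]
    have h2 : Submodule.span ℤ_[p]
        {w | ∃ i : Fin n, k ≤ (i : ℕ) ∧ w = A.mulVec (Pi.single i 1)} = L := by
      rw [hsetL, spanL]
    rw [h1, h2, hsum]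
  -- rational approximation of ⅟A
  let CA : ℝ := 1 + ∑ l, ∑ j, ‖A l j‖
  have hCApos : 0 < CA := by positivity
  have happ : ∀ i j : Fin n, ∃ r : ℚ, ‖(⅟A) i j - (r : ℚ_[p])‖ < CA⁻¹ := fun i j =>
    Padic.rat_dense p ((⅟A) i j) (inv_pos.2 hCApos)
  choose q hq using happ
  let Q : Matrix (Fin n) (Fin n) ℚ := Matrix.of q
  let Qc : Matrix (Fin n) (Fin n) ℚ_[p] := Q.map (Rat.cast : ℚ → ℚ_[p])
  let X : Matrix (Fin n) (Fin n) ℚ_[p] := Qc - ⅟A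
  have hX : ∀ i l : Fin n, ‖X i l‖ < CA⁻¹ := by
    intro i l
    have : X i l = Qc i l - (⅟A) i l := rfl
    rw [this, norm_sub_rev]
    exact hq i l
  let B : Matrix (Fin n) (Fin n) ℚ_[p] := Qc * A
  have hXA : X * A = B - 1 := by
    rw [show X = Qc - ⅟A from rfl, Matrix.sub_mul, invOf_mul_self]
  have hBnear : ∀ i j : Fin n, ‖B i j - (1 : Matrix (Fin n) (Fin n) ℚ_[p]) i j‖ < 1 := by
    intro i j
    have h1 : B i j - (1 : Matrix (Fin n) (Fin n) ℚ_[p]) i j = (X * A) i j := by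
      rw [hXA, Matrix.sub_apply]
    rw [h1, Matrix.mul_apply]
    have hsumle : ∑ l, ‖A l j‖ ≤ CA - 1 := by
      have : ∀ l : Fin n, ‖A l j‖ ≤ ∑ j', ‖A l j'‖ := fun l =>
        Finset.single_le_sum (fun _ _ => norm_nonneg _) (Finset.mem_univ j)
      calc ∑ l, ‖A l j‖ ≤ ∑ l, ∑ j', ‖A l j'‖ := Finset.sum_le_sum fun l _ => this l
        _ = CA - 1 := by rw [show CA = 1 + ∑ l, ∑ j', ‖A l j'‖ from rfl]; ring
    calc ‖∑ l, X i l * A l j‖ ≤ ∑ l, ‖X i l * A l j‖ := norm_sum_le _ _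
      _ = ∑ l, ‖X i l‖ * ‖A l j‖ := by simp [norm_mul]
      _ ≤ ∑ l, CA⁻¹ * ‖A l j‖ := Finset.sum_le_sum fun l _ =>
          mul_le_mul_of_nonneg_right (le_of_lt (hX i l)) (norm_nonneg _)
      _ = CA⁻¹ * ∑ l, ‖A l j‖ := (Finset.mul_sum _ _ _).symm
      _ ≤ CA⁻¹ * (CA - 1) := mul_le_mul_of_nonneg_left hsumle (by positivity)
      _ = 1 - CA⁻¹ := by rw [mul_sub, inv_mul_cancel₀ (ne_of_gt hCApos), mul_one]
      _ < 1 := sub_lt_self 1 (by positivity)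
  have hBle : ∀ i j : Fin n, ‖B i j‖ ≤ 1 := by
    intro i j
    have h1 : ‖(1 : Matrix (Fin n) (Fin n) ℚ_[p]) i j‖ ≤ 1 := by
      rw [Matrix.one_apply]
      split_ifs <;> simp
    have h2 : B i j = (B i j - (1 : Matrix (Fin n) (Fin n) ℚ_[p]) i j)
        + (1 : Matrix (Fin n) (Fin n) ℚ_[p]) i j := by ring
    calc ‖B i j‖ = ‖(B i j - (1 : Matrix (Fin n) (Fin n) ℚ_[p]) i j)
          + (1 : Matrix (Fin n) (Fin n) ℚ_[p]) i j‖ := by rw [← h2]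
      _ ≤ max ‖B i j - (1 : Matrix (Fin n) (Fin n) ℚ_[p]) i j‖
            ‖(1 : Matrix (Fin n) (Fin n) ℚ_[p]) i j‖ := Padic.nonarchimedean _ _
      _ ≤ 1 := max_le (le_of_lt (hBnear i j)) h1
  let B' : Matrix (Fin n) (Fin n) ℤ_[p] := Matrix.of fun i j => (⟨B i j, hBle i j⟩ : ℤ_[p])
  have hB'c : B'.map ((↑) : ℤ_[p] → ℚ_[p]) = B := by ext i j; rfl
  -- determinant of B' is a unit
  haveI : Fact (1 < p) := ⟨hp.one_lt⟩
  have hres : B'.map (PadicInt.toZMod : ℤ_[p] → ZMod p) = 1 := by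
    ext i j
    have hnormlt : ‖B' i j - (1 : Matrix (Fin n) (Fin n) ℤ_[p]) i j‖ < 1 := by
      have hco : ((B' i j - (1 : Matrix (Fin n) (Fin n) ℤ_[p]) i j : ℤ_[p]) : ℚ_[p])
          = B i j - (1 : Matrix (Fin n) (Fin n) ℚ_[p]) i j := by
        rw [PadicInt.coe_sub]
        congr 1
        rw [Matrix.one_apply, Matrix.one_apply]
        split_ifs <;> simp
      rw [PadicInt.norm_def, hco]
      exact hBnear i j
    have hmem : B' i j - (1 : Matrix (Fin n) (Fin n) ℤ_[p]) i j ∈ IsLocalRing.maximalIdeal ℤ_[p] := by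
      rw [PadicInt.maximalIdeal_eq_span_p, Ideal.mem_span_singleton]
      exact (PadicInt.norm_lt_one_iff_dvd _).1 hnormlt
    rw [← PadicInt.ker_toZMod, RingHom.mem_ker, map_sub, sub_eq_zero] at hmem
    rw [Matrix.map_apply, hmem, Matrix.one_apply, Matrix.one_apply]
    split_ifs <;> simp
  have hdetres : (PadicInt.toZMod : ℤ_[p] →+* ZMod p) B'.det = 1 := by
    rw [RingHom.map_det, RingHom.mapMatrix_apply, hres, Matrix.det_one]
  have hdetU : IsUnit B'.det := by
    by_contra hcon
    have hmem : B'.det ∈ IsLocalRing.maximalIdeal ℤ_[p] := (IsLocalRing.mem_maximalIdeal _).2 hcon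
    rw [← PadicInt.ker_toZMod, RingHom.mem_ker] at hmem
    rw [hmem] at hdetres
    exact one_ne_zero hdetres.symm
  let u : ℤ_[p]ˣ := hdetU.unit
  let i0 : Fin n := ⟨0, hn⟩
  let Dd : Fin n → ℤ_[p] := fun i => if i = i0 then ((u⁻¹ : ℤ_[p]ˣ) : ℤ_[p]) else 1
  let Dinv : Fin n → ℤ_[p] := fun i => if i = i0 then ((u : ℤ_[p]ˣ) : ℤ_[p]) else 1
  have hdets : (B' * Matrix.diagonal Dd).det = 1 := by
    rw [Matrix.det_mul, Matrix.det_diagonal]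
    rw [Finset.prod_eq_single i0 (fun b _ hb => if_neg hb)
      (fun h => absurd (Finset.mem_univ i0) h)]
    rw [if_pos rfl]
    rw [show B'.det = (u : ℤ_[p]) from (IsUnit.unit_spec hdetU).symm]
    exact u.mul_inv
  let s : Matrix.SpecialLinearGroup (Fin n) ℤ_[p] := ⟨B' * Matrix.diagonal Dd, hdets⟩
  have hsD : (B' * Matrix.diagonal Dd) * Matrix.diagonal Dinv = B' := by
    rw [Matrix.mul_assoc, Matrix.diagonal_mul_diagonal]
    have hfun : (fun i => Dd i * Dinv i) = fun _ => (1 : ℤ_[p]) := by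
      funext i
      by_cases h : i = i0
      · simp only [Dd, Dinv, if_pos h]; exact u.inv_mul
      · simp only [Dd, Dinv, if_neg h, one_mul]
    rw [hfun, Matrix.diagonal_one, Matrix.mul_one]
  -- Q is invertible
  have hdetB : B.det ≠ 0 := by
    have h1 : B.det = ((B'.det : ℤ_[p]) : ℚ_[p]) := by
      rw [← hB'c]
      exact ((PadicInt.Coe.ringHom (p := p)).map_det B').symm
    rw [h1]
    exact PadicInt.coe_ne_zero.2 hdetU.ne_zero
  have hdetQc : Qc.det ≠ 0 := by
    intro h0
    apply hdetB
    rw [show B = Qc * A from rfl, Matrix.det_mul, h0, zero_mul]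
  have hdetQ : Q.det ≠ 0 := by
    intro h0
    apply hdetQc
    have h1 : Qc.det = ((Q.det : ℚ) : ℚ_[p]) := ((Rat.castHom ℚ_[p]).map_det Q).symm
    rw [h1, h0]
    simp
  have hQu : IsUnit Q := (Matrix.isUnit_iff_isUnit_det Q).2 (isUnit_iff_ne_zero.2 hdetQ)
  refine ⟨hQu.unit, s, ?_⟩
  have hqMat : qMat hQu.unit = Qc := by
    unfold qMat
    rw [hQu.unit_spec]
  have hDinvU : ∀ i, IsUnit (Dinv i) := by
    intro i
    by_cases h : i = i0
    · simp only [Dinv, if_pos h]; exact u.isUnit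
    · simp only [Dinv, if_neg h]; exact isUnit_one
  have hBfac : B = pMat s * (Matrix.diagonal Dinv).map ((↑) : ℤ_[p] → ℚ_[p]) := by
    have hco : ((B' * Matrix.diagonal Dd) * Matrix.diagonal Dinv).map ((↑) : ℤ_[p] → ℚ_[p])
        = ((B' * Matrix.diagonal Dd).map ((↑) : ℤ_[p] → ℚ_[p]))
          * ((Matrix.diagonal Dinv).map ((↑) : ℤ_[p] → ℚ_[p])) :=
      Matrix.map_mul (f := (PadicInt.Coe.ringHom (p := p)))
    rw [← hB'c, ← hsD, hco]
    rfl
  have hdiagmap : (Matrix.diagonal Dinv).map ((↑) : ℤ_[p] → ℚ_[p])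
      = Matrix.diagonal (fun i => (Dinv i : ℚ_[p])) :=
    Matrix.diagonal_map (by simp)
  calc zAct (qMat hQu.unit) M = zAct Qc M := by rw [hqMat]
    _ = zAct Qc (zAct A (stdModule p n k)) := by rw [hMA]
    _ = zAct (Qc * A) (stdModule p n k) := (zAct_mul _ _ _).symm
    _ = zAct (pMat s * (Matrix.diagonal Dinv).map ((↑) : ℤ_[p] → ℚ_[p]))
          (stdModule p n k) := by rw [show Qc * A = B from rfl, hBfac]
    _ = zAct (pMat s) (zAct ((Matrix.diagonal Dinv).map ((↑) : ℤ_[p] → ℚ_[p]))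
          (stdModule p n k)) := zAct_mul _ _ _
    _ = zAct (pMat s) (stdModule p n k) := by
          rw [hdiagmap, zAct_diag Dinv hDinvU]
end
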